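/- arXiv:hep-th/9506215 — 7 statements merged into one kernel-verified Lean document; each statement's English description precedes it below -/
import Mathlib

section
/- If numbers Y(i,j) for i in the integers and j in {1,...,n}, with Y(i,0)=Y(i,n+1)=0, satisfy the Y-system Y(i-1,j)Y(i+1,j) = (1+Y(i,j-1))(1+Y(i,j+1)) (with all Y(i,j) nonzero and 1+Y(i,j) nonzero for 1≤j≤n), then Y(i,j) = Y(i+n+3, n+1-j) for all i in ℤ and j in {1,...,n}. -/
namespace YSysAux

variable {K : Type*} [Field K]

/-- forward pairs: `fwd Y k = (t1 k, t1 (k+1))`. -/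
noncomputable def fwd (Y : ℤ → ℤ → K) : ℕ → K × K
  | 0 => (1, 1)
  | k+1 => ((fwd Y k).2, (1 + Y ((k : ℤ) + 1) 1) / (fwd Y k).1)

/-- backward pairs: `bwd Y k = (t1 (-k), t1 (1-k))`. -/
noncomputable def bwd (Y : ℤ → ℤ → K) : ℕ → K × K
  | 0 => (1, 1)
  | k+1 => ((1 + Y (-(k : ℤ)) 1) / (bwd Y k).2, (bwd Y k).1)

/-- row 1 of the T-array -/
noncomputable def t1 (Y : ℤ → ℤ → K) (i : ℤ) : K :=
  if 0 ≤ i then (fwd Y i.toNat).1 else (bwd Y i.natAbs).1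

theorem fwd_ne (Y : ℤ → ℤ → K) (hz1 : ∀ i, 1 + Y i 1 ≠ 0) :
    ∀ k, (fwd Y k).1 ≠ 0 ∧ (fwd Y k).2 ≠ 0 := by
  intro k
  induction k with
  | zero => simp [fwd]
  | succ k ih => exact ⟨ih.2, div_ne_zero (hz1 _) ih.1⟩

theorem bwd_ne (Y : ℤ → ℤ → K) (hz1 : ∀ i, 1 + Y i 1 ≠ 0) :
    ∀ k, (bwd Y k).1 ≠ 0 ∧ (bwd Y k).2 ≠ 0 := by
  intro k
  induction k with
  | zero => simp [bwd]
  | succ k ih => exact ⟨div_ne_zero (hz1 _) ih.2, ih.1⟩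

theorem t1_coe (Y : ℤ → ℤ → K) (k : ℕ) : t1 Y (k : ℤ) = (fwd Y k).1 := by
  simp [t1]

theorem t1_neg (Y : ℤ → ℤ → K) (k : ℕ) : t1 Y (-(k : ℤ)) = (bwd Y k).1 := by
  rcases Nat.eq_zero_or_pos k with h | h
  · subst h; simp [t1, fwd, bwd]
  · have : ¬ (0 ≤ -(k:ℤ)) := by omega
    simp [t1, this]
    exact fun h' => absurd h' (by omega)

theorem t1_ne (Y : ℤ → ℤ → K) (hz1 : ∀ i, 1 + Y i 1 ≠ 0) (i : ℤ) : t1 Y i ≠ 0 := by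
  unfold t1
  split
  · exact (fwd_ne Y hz1 _).1
  · exact (bwd_ne Y hz1 _).1

theorem t1_rec (Y : ℤ → ℤ → K) (hz1 : ∀ i, 1 + Y i 1 ≠ 0) (i : ℤ) :
    t1 Y (i - 1) * t1 Y (i + 1) = 1 + Y i 1 := by
  rcases le_or_gt 1 i with h | h
  · obtain ⟨k, rfl⟩ : ∃ k : ℕ, i = (k : ℤ) + 1 := ⟨(i-1).toNat, by omega⟩
    rw [show (k:ℤ) + 1 - 1 = (k:ℤ) by ring, show (k:ℤ) + 1 + 1 = ((k+2 : ℕ) : ℤ) by push_cast; ring,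
      t1_coe, t1_coe]
    have : (fwd Y (k+2)).1 = (1 + Y ((k : ℤ) + 1) 1) / (fwd Y k).1 := rfl
    rw [this]
    field_simp [(fwd_ne Y hz1 k).1]
  · obtain ⟨k, rfl⟩ : ∃ k : ℕ, i = -(k : ℤ) := ⟨(-i).toNat, by omega⟩
    rw [show -(k:ℤ) - 1 = -((k+1 : ℕ) : ℤ) by push_cast; ring, t1_neg]
    have h2 : t1 Y (-(k:ℤ) + 1) = (bwd Y k).2 := by
      rcases Nat.eq_zero_or_pos k with hk | hk
      · subst hk; simp [t1, fwd, bwd]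
      · rw [show -(k:ℤ) + 1 = -((k-1 : ℕ) : ℤ) by push_cast [hk]; omega, t1_neg]
        obtain ⟨m, rfl⟩ : ∃ m, k = m + 1 := ⟨k - 1, by omega⟩
        simp [bwd]
    rw [h2]
    have : (bwd Y (k+1)).1 = (1 + Y (-(k : ℤ)) 1) / (bwd Y k).2 := rfl
    rw [this]
    field_simp [(bwd_ne Y hz1 k).2]


variable {K : Type*} [Field K]

/-- NE-diagonal three-term recurrence in a tame frieze. -/
theorem lemA (n : ℤ) (T : ℤ → ℤ → K)
    (hm1 : ∀ i, T (-1) i = 0) (h0 : ∀ i, T 0 i = 1)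
    (hnzT : ∀ j i, 0 ≤ j → j ≤ n + 1 → T j i ≠ 0)
    (hfr : ∀ j i, 0 ≤ j → j ≤ n + 1 →
      T j (i - 1) * T j (i + 1) = T (j - 1) i * T (j + 1) i + 1) :
    ∀ j, 0 ≤ j → j ≤ n + 1 → ∀ i,
      T (j + 1) (i + 1) = T 1 (i + j + 1) * T j i - T (j - 1) (i - 1) := by
  intro j hj
  refine Int.le_induction (motive := fun j _ => j ≤ n + 1 → ∀ i,
      T (j + 1) (i + 1) = T 1 (i + j + 1) * T j i - T (j - 1) (i - 1)) ?_ ?_ j hj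
  · intro _ i
    rw [show (0:ℤ) - 1 = -1 by ring, hm1, h0]
    norm_num
  · intro j hj ih hle i
    have hjn : j ≤ n + 1 := by omega
    have ihh := ih hjn (i + 1)
    rw [show i + 1 + j + 1 = i + j + 2 by ring, show i + 1 - 1 = i by ring,
      show i + 1 + 1 = i + 2 by ring] at ihh
    have e1 := hfr j i hj (by omega)
    have e2 := hfr (j + 1) (i + 1) (by omega) hle
    rw [show j + 1 - 1 = j by ring, show i + 1 - 1 = i by ring, show j + 1 + 1 = j + 2 by ring,
      show i + 1 + 1 = i + 2 by ring] at e2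
    have hx : T j (i + 1) ≠ 0 := hnzT j (i + 1) hj (by omega)
    have key : T j (i + 1) * T (j + 1 + 1) (i + 1) =
        T j (i + 1) * (T 1 (i + (j + 1) + 1) * T (j + 1) i - T (j + 1 - 1) (i - 1)) := by
      rw [show j + 1 + 1 = j + 2 by ring, show i + (j + 1) + 1 = i + j + 2 by ring,
        show j + 1 - 1 = j by ring]
      linear_combination e1 - e2 + T (j + 1) i * ihh
    exact mul_left_cancel₀ hx key

/-- SE-antidiagonal three-term recurrence, by reflection. -/
theorem lemA' (n : ℤ) (T : ℤ → ℤ → K)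
    (hm1 : ∀ i, T (-1) i = 0) (h0 : ∀ i, T 0 i = 1)
    (hnzT : ∀ j i, 0 ≤ j → j ≤ n + 1 → T j i ≠ 0)
    (hfr : ∀ j i, 0 ≤ j → j ≤ n + 1 →
      T j (i - 1) * T j (i + 1) = T (j - 1) i * T (j + 1) i + 1) :
    ∀ j, 0 ≤ j → j ≤ n + 1 → ∀ i,
      T (j + 1) (i - 1) = T 1 (i - j - 1) * T j i - T (j - 1) (i + 1) := by
  intro j h0j hjn i
  have h := lemA n (fun j i => T j (-i)) (fun i => hm1 (-i)) (fun i => h0 (-i))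
    (fun j i a b => hnzT j (-i) a b)
    (fun j i a b => by
      rw [show -(i - 1) = -i + 1 by ring, show -(i + 1) = -i - 1 by ring, mul_comm]
      exact hfr j (-i) a b) j h0j hjn (-i)
  rw [show -(-i + 1) = i - 1 by ring, show -(-i + j + 1) = i - j - 1 by ring,
    show -(-i - 1) = i + 1 by ring, neg_neg] at h
  exact h

/-- glide symmetry. -/
theorem glide (n : ℤ) (hn : 1 ≤ n) (T : ℤ → ℤ → K)
    (hm1 : ∀ i, T (-1) i = 0) (h0 : ∀ i, T 0 i = 1)
    (hnzT : ∀ j i, 0 ≤ j → j ≤ n + 1 → T j i ≠ 0)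
    (hfr : ∀ j i, 0 ≤ j → j ≤ n + 1 →
      T j (i - 1) * T j (i + 1) = T (j - 1) i * T (j + 1) i + 1)
    (hTop : ∀ i, T (n + 2) i = 0) :
    ∀ k, -1 ≤ k → k ≤ n + 2 → ∀ c,
      T (n + 1 - k) (c + n + 3 + k) = T (n + 1) (c + n + 3) * T k (c + k) := by
  have main : ∀ k, 0 ≤ k → k ≤ n + 2 →
      (∀ c, T (n + 1 - k) (c + n + 3 + k) = T (n + 1) (c + n + 3) * T k (c + k)) ∧
      (∀ c, T (n + 1 - (k - 1)) (c + n + 3 + (k - 1)) =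
        T (n + 1) (c + n + 3) * T (k - 1) (c + (k - 1))) := by
    intro k hk
    refine Int.le_induction (motive := fun k _ => k ≤ n + 2 →
        (∀ c, T (n + 1 - k) (c + n + 3 + k) = T (n + 1) (c + n + 3) * T k (c + k)) ∧
        (∀ c, T (n + 1 - (k - 1)) (c + n + 3 + (k - 1)) =
          T (n + 1) (c + n + 3) * T (k - 1) (c + (k - 1)))) ?_ ?_ k hk
    · intro _
      constructor
      · intro c
        rw [show n + 1 - 0 = n + 1 by ring, show c + n + 3 + 0 = c + n + 3 by ring,
          show c + (0:ℤ) = c by ring, h0, mul_one]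
      · intro c
        rw [show (0:ℤ) - 1 = -1 by ring, show n + 1 - -1 = n + 2 by ring, hm1,
          show c + n + 3 + -1 = c + n + 2 by ring, hTop, mul_zero]
    · intro k hk ih hle
      obtain ⟨ih1, ih0⟩ := ih (by omega)
      refine ⟨?_, by rw [show k + 1 - 1 = k by ring]; exact ih1⟩
      intro c
      -- u-recurrence from lemA at (j := k, i := c + k)
      have hu := lemA n T hm1 h0 hnzT hfr k hk (by omega) (c + k)
      rw [show c + k + k + 1 = c + 2*k + 1 by ring] at hu
      -- h-recurrence from lemA' at (j := n + 1 - k, i := c + n + 3 + k)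
      have hbb1 : (0:ℤ) ≤ n + 1 - k := by omega
      have hbb2 : n + 1 - k ≤ n + 1 := by omega
      have hh := lemA' n T hm1 h0 hnzT hfr (n + 1 - k) hbb1 hbb2 (c + n + 3 + k)
      rw [show n + 1 - k + 1 = n + 1 - (k - 1) by ring,
        show c + n + 3 + k - 1 = c + n + 3 + (k - 1) by ring,
        show c + n + 3 + k - (n + 1 - k) - 1 = c + 2*k + 1 by ring,
        show n + 1 - k - 1 = n + 1 - (k + 1) by ring,
        show c + n + 3 + k + 1 = c + n + 3 + (k + 1) by ring] at hh
      have i0 := ih0 c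
      have i1 := ih1 c
      rw [show c + (k - 1) = c + k - 1 by ring] at i0
      rw [show c + (k + 1) = c + k + 1 by ring]
      linear_combination hh - i0 + T 1 (c + 2*k + 1) * i1 - T (n + 1) (c + n + 3) * hu
  intro k hk1 hk2 c
  rcases eq_or_lt_of_le hk1 with h | h
  · have := (main 0 le_rfl (by omega)).2 c
    rw [show (0:ℤ) - 1 = -1 by ring] at this
    rw [← h]
    exact this
  · exact (main k (by omega) hk2).1 c

/-- the T-array rows -/
noncomputable def Trow (Y : ℤ → ℤ → K) : ℕ → ℤ → K
  | 0 => fun _ => 1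
  | 1 => t1 Y
  | (j+2) => fun i => Y i ((j : ℤ) + 1) / Trow Y j i

end YSysAux

open YSysAux in
/-- Periodicity of the (A_n, A_1) Y-system:
if `Y(i,j)` for `i ∈ ℤ`, `1 ≤ j ≤ n` (with `Y(i,0) = Y(i,n+1) = 0`) satisfy
`Y(i-1,j) Y(i+1,j) = (1 + Y(i,j-1))(1 + Y(i,j+1))`, with all `Y(i,j)` and `1 + Y(i,j)`
nonzero for `1 ≤ j ≤ n`, then `Y(i,j) = Y(i+n+3, n+1-j)`. -/
theorem y_system_periodicity {K : Type*} [Field K] (n : ℤ) (hn : 1 ≤ n)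
    (Y : ℤ → ℤ → K)
    (hb : ∀ i, Y i 0 = 0 ∧ Y i (n + 1) = 0)
    (hnz : ∀ i j, 1 ≤ j → j ≤ n → Y i j ≠ 0)
    (hnz' : ∀ i j, 1 ≤ j → j ≤ n → 1 + Y i j ≠ 0)
    (hsys : ∀ i j, 1 ≤ j → j ≤ n →
      Y (i - 1) j * Y (i + 1) j = (1 + Y i (j - 1)) * (1 + Y i (j + 1))) :
    ∀ i j, 1 ≤ j → j ≤ n → Y i j = Y (i + n + 3) (n + 1 - j) := by
  have hz1 : ∀ i, 1 + Y i 1 ≠ 0 := fun i => hnz' i 1 le_rfl hn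
  set T : ℤ → ℤ → K := fun j i => if j < 0 then 0 else Trow Y j.toNat i with hT
  -- ℕ-level nonvanishing
  have nzP : ∀ m : ℕ, ((m : ℤ) ≤ n + 1 → ∀ i, Trow Y m i ≠ 0) ∧
      (((m : ℤ) + 1) ≤ n + 1 → ∀ i, Trow Y (m + 1) i ≠ 0) := by
    intro m
    induction m with
    | zero =>
      constructor
      · intro _ i; simp [Trow]
      · intro _ i; exact t1_ne Y hz1 i
    | succ m ih =>
      refine ⟨fun h => ih.2 (by push_cast at h ⊢; omega), ?_⟩
      intro hle i
      have d : Trow Y (m + 2) i = Y i ((m : ℤ) + 1) / Trow Y m i := rfl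
      rw [show m + 1 + 1 = m + 2 by ring, d]
      push_cast at hle
      exact div_ne_zero (hnz i ((m : ℤ) + 1) (by omega) (by omega)) (ih.1 (by omega) i)
  have nzN : ∀ m : ℕ, (m : ℤ) ≤ n + 1 → ∀ i, Trow Y m i ≠ 0 := fun m => (nzP m).1
  -- ℕ-level row relation
  have recP : ∀ m : ℕ, ((m : ℤ) ≤ n + 1 → ∀ i,
        Trow Y m (i - 1) * Trow Y m (i + 1) = 1 + Y i (m : ℤ)) ∧
      (((m : ℤ) + 1) ≤ n + 1 → ∀ i,
        Trow Y (m + 1) (i - 1) * Trow Y (m + 1) (i + 1) = 1 + Y i ((m : ℤ) + 1)) := by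
    intro m
    induction m with
    | zero =>
      constructor
      · intro _ i; simp [Trow, (hb i).1]
      · intro _ i
        have : Trow Y 1 = t1 Y := rfl
        rw [this, t1_rec Y hz1 i]
        norm_num
    | succ m ih =>
      refine ⟨fun h => by
        have := ih.2 (by push_cast at h ⊢; omega)
        push_cast
        exact this, ?_⟩
      intro hle i
      push_cast at hle
      have d1 : Trow Y (m + 2) (i - 1) = Y (i - 1) ((m : ℤ) + 1) / Trow Y m (i - 1) := rfl
      have d2 : Trow Y (m + 2) (i + 1) = Y (i + 1) ((m : ℤ) + 1) / Trow Y m (i + 1) := rfl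
      have hz : Trow Y m (i - 1) ≠ 0 := nzN m (by omega) _
      have hz' : Trow Y m (i + 1) ≠ 0 := nzN m (by omega) _
      have rm := ih.1 (by omega) i
      have hy : 1 + Y i (m : ℤ) ≠ 0 := by
        rcases Nat.eq_zero_or_pos m with h | h
        · subst h; simp [(hb i).1]
        · exact hnz' i m (by omega) (by omega)
      have e := hsys i ((m : ℤ) + 1) (by omega) (by omega)
      rw [show (m : ℤ) + 1 - 1 = (m : ℤ) by ring, show (m : ℤ) + 1 + 1 = (m : ℤ) + 2 by ring] at e
      rw [show m + 1 + 1 = m + 2 by ring, d1, d2, div_mul_div_comm, rm, div_eq_iff hy]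
      push_cast
      rw [show (m : ℤ) + 1 + 1 = (m : ℤ) + 2 by ring]
      linear_combination e
  have recN : ∀ m : ℕ, (m : ℤ) ≤ n + 1 → ∀ i,
      Trow Y m (i - 1) * Trow Y m (i + 1) = 1 + Y i (m : ℤ) := fun m => (recP m).1
  -- ℕ-level product relation
  have prodN : ∀ m : ℕ, (m : ℤ) ≤ n + 1 → ∀ i,
      Trow Y m i * Trow Y (m + 2) i = Y i ((m : ℤ) + 1) := by
    intro m hle i
    have d : Trow Y (m + 2) i = Y i ((m : ℤ) + 1) / Trow Y m i := rfl
    rw [d, mul_comm, div_mul_cancel₀ _ (nzN m hle i)]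
  -- ℤ-level bridging
  have Tcoe : ∀ (m : ℕ) (i : ℤ), T (m : ℤ) i = Trow Y m i := by
    intro m i; simp [hT]
  have hm1 : ∀ i, T (-1) i = 0 := by intro i; simp [hT]
  have hT0 : ∀ i, T 0 i = 1 := by intro i; simp [hT]; rfl
  have hnzT : ∀ j i, 0 ≤ j → j ≤ n + 1 → T j i ≠ 0 := by
    intro j i h0 h1
    obtain ⟨m, rfl⟩ : ∃ m : ℕ, j = (m : ℤ) := ⟨j.toNat, by omega⟩
    rw [Tcoe]
    exact nzN m h1 i
  have hC1 : ∀ j, 1 ≤ j → j ≤ n + 2 → ∀ i, T (j - 1) i * T (j + 1) i = Y i j := by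
    intro j h1 h2 i
    obtain ⟨m, rfl⟩ : ∃ m : ℕ, j = (m : ℤ) + 1 := ⟨(j - 1).toNat, by omega⟩
    rw [show (m : ℤ) + 1 - 1 = (m : ℤ) by ring,
      show (m : ℤ) + 1 + 1 = ((m + 2 : ℕ) : ℤ) by push_cast; ring, Tcoe, Tcoe]
    exact prodN m (by omega) i
  have hTop : ∀ i, T (n + 2) i = 0 := by
    intro i
    obtain ⟨N, hN⟩ : ∃ N : ℕ, n = (N : ℤ) := ⟨n.toNat, by omega⟩
    have : T (n + 2) i = Trow Y (N + 2) i := by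
      rw [show n + 2 = ((N + 2 : ℕ) : ℤ) by rw [hN]; push_cast; ring, Tcoe]
    rw [this]
    have d : Trow Y (N + 2) i = Y i ((N : ℤ) + 1) / Trow Y N i := rfl
    rw [d, show (N : ℤ) + 1 = n + 1 by rw [hN], (hb i).2, zero_div]
  have hfr : ∀ j i, 0 ≤ j → j ≤ n + 1 →
      T j (i - 1) * T j (i + 1) = T (j - 1) i * T (j + 1) i + 1 := by
    intro j i h0 h1
    rcases eq_or_lt_of_le h0 with h | h
    · rw [← h, hT0, hT0, show (0 : ℤ) - 1 = -1 by ring, hm1, zero_mul, zero_add, mul_one]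
    · have hj1 : 1 ≤ j := h
      obtain ⟨m, rfl⟩ : ∃ m : ℕ, j = (m : ℤ) := ⟨j.toNat, by omega⟩
      rw [Tcoe, Tcoe, recN m h1 i, hC1 (m : ℤ) hj1 (by omega) i]
      ring
  have htt : ∀ x, T (n + 1) (x - 1) * T (n + 1) (x + 1) = 1 := by
    intro x
    rw [hfr (n + 1) x (by omega) le_rfl, show n + 1 - 1 = n by ring,
      show n + 1 + 1 = n + 2 by ring, hTop, mul_zero, zero_add]
  -- conclusion
  intro i j hj1 hjn
  have g1 := glide n hn T hm1 hT0 hnzT hfr hTop (j - 1) (by omega) (by omega) (i - (j - 1))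
  rw [show n + 1 - (j - 1) = n + 2 - j by ring,
    show i - (j - 1) + n + 3 + (j - 1) = i + n + 3 by ring,
    show i - (j - 1) + n + 3 = i - j + n + 4 by ring,
    show i - (j - 1) + (j - 1) = i by ring] at g1
  have g2 := glide n hn T hm1 hT0 hnzT hfr hTop (j + 1) (by omega) (by omega) (i - (j + 1))
  rw [show n + 1 - (j + 1) = n - j by ring,
    show i - (j + 1) + n + 3 + (j + 1) = i + n + 3 by ring,
    show i - (j + 1) + n + 3 = i - j + n + 2 by ring,
    show i - (j + 1) + (j + 1) = i by ring] at g2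
  have e0 : Y i j = T (j - 1) i * T (j + 1) i := (hC1 j hj1 (by omega) i).symm
  have e1 : Y (i + n + 3) (n + 1 - j) = T (n - j) (i + n + 3) * T (n + 2 - j) (i + n + 3) := by
    have := hC1 (n + 1 - j) (by omega) (by omega) (i + n + 3)
    rw [show n + 1 - j - 1 = n - j by ring, show n + 1 - j + 1 = n + 2 - j by ring] at this
    exact this.symm
  have e2 : T (n + 1) (i - j + n + 2) * T (n + 1) (i - j + n + 4) = 1 := by
    have := htt (i - j + n + 3)
    rw [show i - j + n + 3 - 1 = i - j + n + 2 by ring,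
      show i - j + n + 3 + 1 = i - j + n + 4 by ring] at this
    exact this
  rw [e1, g1, g2]
  linear_combination e0 - (T (j + 1) i * T (j - 1) i) * e2
end

section
/- For each j with 0 ≤ j ≤ n, the values b_j = (1 - a_1 a_2 ⋯ a_j)/(1 - a_1 a_2 ⋯ a_{j+1}) (with a_{n+1} = 0 and empty product 1) satisfy the recursion ((1 - b_{j-1})/b_{j-1})·(a_1⋯a_j(1-a_{j+1})/(1 - a_1⋯a_j)) = (a_{j+1} - 1)·(a_1⋯a_{j-1}(a_j - 1)/(1 - a_1⋯a_j)), equivalently they satisfy the X-system relation (1 - 1/b_{j-1})(1 - 1/X(j+2,j)) = (1 - a_j)(1 - a_{j+1}) with b_{j-1} = X(j+1,j-1) and a_j = X(j,j). -/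
/-- The values `b j = (1 - a₁⋯a_j)/(1 - a₁⋯a_{j+1})` (with `a_{n+1} = 0`, empty product 1). -/
noncomputable def diagValue {K : Type*} [Field K] (a : ℤ → K) (j : ℤ) : K :=
  (1 - ∏ k ∈ Finset.Icc 1 j, a k) / (1 - ∏ k ∈ Finset.Icc 1 (j + 1), a k)

private lemma prod_Icc_step {K : Type*} [Field K] (a : ℤ → K) (j : ℤ) (h : 1 ≤ j) :
    ∏ k ∈ Finset.Icc 1 j, a k = (∏ k ∈ Finset.Icc 1 (j-1), a k) * a j := by
  have hins : Finset.Icc (1:ℤ) j = insert j (Finset.Icc 1 (j-1)) := by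
    ext x; simp [Finset.mem_Icc]; omega
  rw [hins, Finset.prod_insert (by simp)]
  ring

private lemma alg1 {K : Type*} [Field K] (P x y : K) (hx : x ≠ 0) (h : 1 - P * x ≠ 0) :
    ((1 - x) / x) * ((P * x) * (1 - y) / (1 - P * x))
      = (y - 1) * (P * (x - 1) / (1 - P * x)) := by
  field_simp
  ring

private lemma alg2 {K : Type*} [Field K] (P x y : K) (hx : x ≠ 0)
    (h1 : 1 - P * x ≠ 0) (h2 : 1 - P * x * y ≠ 0) :
    (1 - 1 / x) * (1 - 1 / ((1 - P * x) / (1 - P * x * y)))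
      = (1 - (1 - P) / (1 - P * x)) * (1 - y) := by
  rw [one_div_div]
  have h1' : 1 - x * P ≠ 0 := by rwa [mul_comm]
  field_simp
  ring

/-- The values `b_j = (1 - a₁⋯a_j)/(1 - a₁⋯a_{j+1})` satisfy the recursion
`((1-a_j)/a_j)·(a₁⋯a_j(1-a_{j+1})/(1-a₁⋯a_j)) = (a_{j+1}-1)·(a₁⋯a_{j-1}(a_j-1)/(1-a₁⋯a_j))`,
equivalently they satisfy the X-system relation
`(1 - 1/X(j,j))(1 - 1/X(j+2,j)) = (1 - X(j+1,j-1))(1 - X(j+1,j+1))` with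
`X(j+2,j) = b_j`, `X(j+1,j-1) = b_{j-1}`, `X(j,j) = a_j`, `X(j+1,j+1) = a_{j+1}`. -/
theorem diag_recursion {K : Type*} [Field K] (n : ℤ) (hn : 1 ≤ n) (a : ℤ → K)
    (han : a (n + 1) = 0)
    (ha : ∀ j, 1 ≤ j → j ≤ n → a j ≠ 0)
    (hP : ∀ j, 1 ≤ j → j ≤ n → (∏ k ∈ Finset.Icc 1 j, a k) ≠ 1) :
    ∀ j, 1 ≤ j → j ≤ n →
      ((1 - a j) / a j) *
          ((∏ k ∈ Finset.Icc 1 j, a k) * (1 - a (j + 1)) / (1 - ∏ k ∈ Finset.Icc 1 j, a k))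
        = (a (j + 1) - 1) *
          ((∏ k ∈ Finset.Icc 1 (j - 1), a k) * (a j - 1) / (1 - ∏ k ∈ Finset.Icc 1 j, a k)) ∧
      (1 - 1 / a j) * (1 - 1 / diagValue a j)
        = (1 - diagValue a (j - 1)) * (1 - a (j + 1)) := by
  intro j h1 hjn
  have haj : a j ≠ 0 := ha j h1 hjn
  have hQ : ∏ k ∈ Finset.Icc 1 j, a k = (∏ k ∈ Finset.Icc 1 (j-1), a k) * a j :=
    prod_Icc_step a j h1
  have hR : ∏ k ∈ Finset.Icc 1 (j+1), a k = (∏ k ∈ Finset.Icc 1 j, a k) * a (j+1) := by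
    have := prod_Icc_step a (j+1) (by omega)
    simpa using this
  have hQ1 : 1 - ∏ k ∈ Finset.Icc 1 j, a k ≠ 0 := sub_ne_zero.mpr (Ne.symm (hP j h1 hjn))
  have hR1 : 1 - ∏ k ∈ Finset.Icc 1 (j+1), a k ≠ 0 := by
    rcases eq_or_lt_of_le hjn with rfl | hlt
    · rw [hR, han, mul_zero]; norm_num
    · exact sub_ne_zero.mpr (Ne.symm (hP (j+1) (by omega) (by omega)))
  rw [hR, hQ] at hR1
  rw [hQ] at hQ1
  constructor
  · rw [hQ]
    exact alg1 _ _ _ haj hQ1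
  · have hdm1 : (j - 1) + 1 = j := by ring
    unfold diagValue
    rw [hdm1, hR, hQ]
    exact alg2 _ _ _ haj hQ1 hR1
end

section
/- Let C be the multiplicative group of nowhere vanishing continuously differentiable functions from [0,1] to (0,∞). Let f_1,...,f_N : [0,1] → (0,1) be continuously differentiable functions such that the element ∑_{i=1}^N f_i ⊗ (1 - f_i) of C ⊗_ℤ C lies in the subgroup S²C generated by elements of the form g ⊗ h + h ⊗ g. Then the function x ↦ ∑_{i=1}^N L(f_i(x)) is constant on [0,1], where L is the Rogers dilogarithm. -/
open TensorProduct

/-- The Rogers dilogarithm on `[0,1]`. -/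
noncomputable def rogersL (z : ℝ) : ℝ :=
  -(1 / 2) * ∫ t in (0:ℝ)..z, (Real.log (1 - t) / t + Real.log t / (1 - t))

/-- The multiplicative group `C` of nowhere vanishing continuously differentiable functions
from `[0,1]` to `(0,∞)` (as a subgroup of the group of `ℝˣ`-valued functions on `[0,1]`). -/
def posC1 : Subgroup (↥(Set.Icc (0:ℝ) 1) → ℝˣ) where
  carrier := {f | (∀ x, 0 < ((f x : ℝˣ) : ℝ)) ∧
    ∃ F : ℝ → ℝ, ContDiffOn ℝ 1 F (Set.Icc 0 1) ∧ ∀ x : ↥(Set.Icc (0:ℝ) 1), F x = f x}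
  one_mem' := ⟨fun x => by simp, fun _ => 1, contDiffOn_const, fun x => by simp⟩
  mul_mem' := by
    rintro f g ⟨hf, F, hF, hFv⟩ ⟨hg, G, hG, hGv⟩
    refine ⟨fun x => by simpa using mul_pos (hf x) (hg x), F * G, hF.mul hG, fun x => ?_⟩
    simp [hFv x, hGv x]
  inv_mem' := by
    rintro f ⟨hf, F, hF, hFv⟩
    refine ⟨fun x => by simpa using inv_pos.mpr (hf x), F⁻¹,
      hF.inv (fun x hx => ?_), fun x => ?_⟩
    · rw [show F x = ((f ⟨x, hx⟩ : ℝˣ) : ℝ) from hFv ⟨x, hx⟩]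
      exact (f ⟨x, hx⟩).ne_zero
    · simp [hFv x]

/-- The subgroup `S²C ⊂ C ⊗_ℤ C` generated by symmetric tensors `a ⊗ b + b ⊗ a`. -/
noncomputable def sq2C :
    AddSubgroup (TensorProduct ℤ (Additive ↥posC1) (Additive ↥posC1)) :=
  AddSubgroup.closure
    {t | ∃ a b : Additive ↥posC1, t = a ⊗ₜ[ℤ] b + b ⊗ₜ[ℤ] a}

section RogersAux

open MeasureTheory

/-- The integrand of the Rogers dilogarithm. -/
noncomputable def rogersInt (t : ℝ) : ℝ := Real.log (1 - t) / t + Real.log t / (1 - t)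

lemma rogersInt_continuousAt {z : ℝ} (hz : z ∈ Set.Ioo (0:ℝ) 1) :
    ContinuousAt rogersInt z := by
  have h1 : z ≠ 0 := ne_of_gt hz.1
  have h2 : (1:ℝ) - z ≠ 0 := by have := hz.2; intro h; linarith
  have c1 : ContinuousAt (fun t : ℝ => Real.log (1 - t)) z :=
    (Real.continuousAt_log h2).comp (continuousAt_const.sub continuousAt_id)
  have c2 : ContinuousAt Real.log z := Real.continuousAt_log h1
  exact ((c1.div continuousAt_id h1)).add (c2.div (continuousAt_const.sub continuousAt_id) h2)

lemma rogersInt_measurable : Measurable rogersInt :=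
  ((Real.measurable_log.comp (measurable_const.sub measurable_id)).div measurable_id).add
    (Real.measurable_log.div (measurable_const.sub measurable_id))

lemma rogersInt_bound {z t : ℝ} (hz : z < 1) (ht : t ∈ Set.Ioc (0:ℝ) z) :
    ‖rogersInt t‖ ≤ ‖(3 / (1 - z)) * t ^ (-(1/2) : ℝ)‖ := by
  obtain ⟨ht0, htz⟩ := ht
  have ht1 : t < 1 := lt_of_le_of_lt htz hz
  have hb : (0:ℝ) < 1 - z := by linarith
  have ha : (0:ℝ) < 1 - t := by linarith
  have hba : 1 - z ≤ 1 - t := by linarith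
  set u : ℝ := t ^ (-(1/2) : ℝ) with hu
  have hu0 : 0 < u := Real.rpow_pos_of_pos ht0 _
  have hu1 : 1 ≤ u :=
    Real.one_le_rpow_of_pos_of_le_one_of_nonpos ht0 ht1.le (by norm_num)
  have hlogu : Real.log u = -(1/2) * Real.log t := Real.log_rpow ht0 _
  have hlogt : -Real.log t ≤ 2 * u := by
    have h := Real.log_le_sub_one_of_pos hu0
    rw [hlogu] at h
    linarith
  have hlog1 : -Real.log (1 - t) ≤ t / (1 - t) := by
    have h := Real.log_le_sub_one_of_pos (inv_pos.mpr ha)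
    rw [Real.log_inv] at h
    have h2 : (1 - t)⁻¹ - 1 = t / (1 - t) := by field_simp; ring
    linarith [h2 ▸ h]
  have hl10 : Real.log (1 - t) ≤ 0 := Real.log_nonpos (by linarith) (by linarith)
  have hlt0 : Real.log t ≤ 0 := Real.log_nonpos ht0.le ht1.le
  have hsum0 : rogersInt t ≤ 0 := by
    unfold rogersInt
    have := div_nonpos_of_nonpos_of_nonneg hl10 ht0.le
    have := div_nonpos_of_nonpos_of_nonneg hlt0 ha.le
    linarith
  have hrhs0 : (0:ℝ) ≤ 3 / (1 - z) * u := by positivity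
  rw [Real.norm_eq_abs, Real.norm_eq_abs, abs_of_nonpos hsum0, abs_of_nonneg hrhs0]
  have e1 : -Real.log (1 - t) / t ≤ 1 / (1 - t) := by
    rw [div_le_div_iff₀ ht0 ha]
    have h := (le_div_iff₀ ha).mp hlog1
    linarith
  have e2 : -Real.log t / (1 - t) ≤ 2 * u / (1 - z) := by
    rw [div_le_div_iff₀ ha hb]
    nlinarith [mul_le_mul_of_nonneg_left hba (neg_nonneg.2 hlt0),
      mul_le_mul_of_nonneg_right hlogt ha.le]
  have e3 : 1 / (1 - t) ≤ u / (1 - z) := by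
    rw [div_le_div_iff₀ ha hb]
    nlinarith [mul_le_mul_of_nonneg_right hu1 ha.le]
  have erw : -rogersInt t = -Real.log (1 - t) / t + -Real.log t / (1 - t) := by
    unfold rogersInt; ring
  rw [erw]
  calc -Real.log (1 - t) / t + -Real.log t / (1 - t)
      ≤ u / (1 - z) + 2 * u / (1 - z) := add_le_add (e1.trans e3) e2
    _ = 3 / (1 - z) * u := by ring

lemma rogersInt_integrable {z : ℝ} (hz : z ∈ Set.Ioo (0:ℝ) 1) :
    IntervalIntegrable rogersInt volume 0 z := by
  have hmaj : IntervalIntegrable (fun t => 3 / (1 - z) * t ^ (-(1/2) : ℝ)) volume 0 z :=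
    (intervalIntegral.intervalIntegrable_rpow' (by norm_num)).const_mul _
  refine hmaj.mono_fun rogersInt_measurable.aestronglyMeasurable ?_
  rw [Set.uIoc_of_le hz.1.le]
  exact (ae_restrict_iff' measurableSet_Ioc).2
    (Filter.Eventually.of_forall fun t ht => rogersInt_bound hz.2 ht)

lemma hasDerivAt_rogersL {z : ℝ} (hz : z ∈ Set.Ioo (0:ℝ) 1) :
    HasDerivAt rogersL (-(1/2) * rogersInt z) z := by
  have hcont : ContinuousOn rogersInt (Set.Ioo 0 1) := fun w hw =>
    (rogersInt_continuousAt hw).continuousWithinAt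
  have h := intervalIntegral.integral_hasDerivAt_right (rogersInt_integrable hz)
    (hcont.stronglyMeasurableAtFilter isOpen_Ioo z hz) (rogersInt_continuousAt hz)
  exact HasDerivAt.const_mul (-(1/2) : ℝ) h

lemma continuousOn_rogersL : ContinuousOn rogersL (Set.Ioo 0 1) := fun z hz =>
  (hasDerivAt_rogersL hz).continuousAt.continuousWithinAt

/-- A canonical `log` of an element of `posC1`, as a function on `ℝ`. -/
noncomputable def lgC (g : ↥posC1) (t : ℝ) : ℝ :=
  if h : t ∈ Set.Icc (0:ℝ) 1 then
    Real.log (((g : ↥(Set.Icc (0:ℝ) 1) → ℝˣ) ⟨t, h⟩ : ℝˣ) : ℝ) else 0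

lemma posC1_pos (g : ↥posC1) (x : ↥(Set.Icc (0:ℝ) 1)) :
    0 < (((g : ↥(Set.Icc (0:ℝ) 1) → ℝˣ) x : ℝˣ) : ℝ) := g.2.1 x

lemma posC1_ext (g : ↥posC1) : ∃ Fg : ℝ → ℝ, ContDiffOn ℝ 1 Fg (Set.Icc 0 1) ∧
    ∀ x : ↥(Set.Icc (0:ℝ) 1), Fg x = (((g : ↥(Set.Icc (0:ℝ) 1) → ℝˣ) x : ℝˣ) : ℝ) := g.2.2

lemma lgC_mul (g h : ↥posC1) (t : ℝ) : lgC (g * h) t = lgC g t + lgC h t := by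
  unfold lgC
  split_ifs with hmem
  · have e : ((((g * h : ↥posC1) : ↥(Set.Icc (0:ℝ) 1) → ℝˣ) ⟨t, hmem⟩ : ℝˣ) : ℝ)
        = (((g : ↥(Set.Icc (0:ℝ) 1) → ℝˣ) ⟨t, hmem⟩ : ℝˣ) : ℝ)
          * (((h : ↥(Set.Icc (0:ℝ) 1) → ℝˣ) ⟨t, hmem⟩ : ℝˣ) : ℝ) := rfl
    rw [e, Real.log_mul (posC1_pos g _).ne' (posC1_pos h _).ne']
  · ring

lemma lgC_eqOn (g : ↥posC1) {fg : ℝ → ℝ}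
    (hval : ∀ u : ↥(Set.Icc (0:ℝ) 1), (((g : ↥(Set.Icc (0:ℝ) 1) → ℝˣ) u : ℝˣ) : ℝ) = fg u) :
    Set.EqOn (lgC g) (fun t => Real.log (fg t)) (Set.Icc 0 1) := fun t ht => by
  simp only [lgC, dif_pos ht, hval ⟨t, ht⟩]

lemma lgC_diff (g : ↥posC1) {x : ℝ} (hx : x ∈ Set.Icc (0:ℝ) 1) :
    DifferentiableWithinAt ℝ (lgC g) (Set.Icc 0 1) x := by
  obtain ⟨Fg, hFg, hFgv⟩ := posC1_ext g
  have heq := lgC_eqOn g (fun u => (hFgv u).symm)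
  have hpos : 0 < Fg x := by rw [hFgv ⟨x, hx⟩]; exact posC1_pos g _
  have hd : DifferentiableWithinAt ℝ (fun t => Real.log (Fg t)) (Set.Icc 0 1) x :=
    (Real.differentiableAt_log hpos.ne').comp_differentiableWithinAt x
      ((hFg.differentiableOn one_ne_zero) x hx)
  exact hd.congr heq (heq hx)

lemma lgC_derivWithin (g : ↥posC1) {fg : ℝ → ℝ} {x d : ℝ} (hx : x ∈ Set.Icc (0:ℝ) 1)
    (hval : ∀ u : ↥(Set.Icc (0:ℝ) 1), (((g : ↥(Set.Icc (0:ℝ) 1) → ℝˣ) u : ℝˣ) : ℝ) = fg u)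
    (hder : HasDerivWithinAt fg d (Set.Icc 0 1) x) (hpos : 0 < fg x) :
    derivWithin (lgC g) (Set.Icc 0 1) x = (fg x)⁻¹ * d := by
  have heq := lgC_eqOn g hval
  rw [derivWithin_congr heq (heq hx)]
  exact ((Real.hasDerivAt_log hpos.ne').comp_hasDerivWithinAt x hder).derivWithin
    (uniqueDiffOn_Icc one_pos x hx)

/-- Evaluation of `log` at a point, as an additive homomorphism. -/
noncomputable def LLhom (x : ℝ) : Additive ↥posC1 →+ ℝ :=
  AddMonoidHom.mk' (fun g => lgC (Additive.toMul g) x) (fun a b => lgC_mul _ _ x)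

/-- Evaluation of the (one-sided) derivative of `log` at a point, as an additive
homomorphism. -/
noncomputable def DDhom (x : ℝ) (hx : x ∈ Set.Icc (0:ℝ) 1) : Additive ↥posC1 →+ ℝ :=
  AddMonoidHom.mk' (fun g => derivWithin (lgC (Additive.toMul g)) (Set.Icc 0 1) x)
    (fun a b => by
      show derivWithin (lgC (Additive.toMul (a + b))) (Set.Icc 0 1) x
          = derivWithin (lgC (Additive.toMul a)) (Set.Icc 0 1) x
            + derivWithin (lgC (Additive.toMul b)) (Set.Icc 0 1) x
      have h1 := lgC_diff (Additive.toMul a) hx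
      have h2 := lgC_diff (Additive.toMul b) hx
      have e : lgC (Additive.toMul (a + b))
          = fun u => lgC (Additive.toMul a) u + lgC (Additive.toMul b) u :=
        funext fun u => lgC_mul _ _ u
      rw [e, derivWithin_fun_add h1 h2])

/-- The antisymmetric bilinear form `(g,h) ↦ log g · (log h)' − log h · (log g)'` at `x`. -/
noncomputable def Bmap (x : ℝ) (hx : x ∈ Set.Icc (0:ℝ) 1) :
    Additive ↥posC1 →ₗ[ℤ] Additive ↥posC1 →ₗ[ℤ] ℝ :=
  LinearMap.mk₂ ℤ (fun a b => LLhom x a * DDhom x hx b - LLhom x b * DDhom x hx a)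
    (fun a a' b => by simp only [map_add]; ring)
    (fun c a b => by
      simp only [AddMonoidHom.map_zsmul, zsmul_eq_mul]; ring)
    (fun a b b' => by simp only [map_add]; ring)
    (fun c a b => by
      simp only [AddMonoidHom.map_zsmul, zsmul_eq_mul]; ring)

noncomputable def phiMap (x : ℝ) (hx : x ∈ Set.Icc (0:ℝ) 1) :
    TensorProduct ℤ (Additive ↥posC1) (Additive ↥posC1) →ₗ[ℤ] ℝ :=
  TensorProduct.lift (Bmap x hx)

lemma phi_vanish (x : ℝ) (hx : x ∈ Set.Icc (0:ℝ) 1)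
    {w : TensorProduct ℤ (Additive ↥posC1) (Additive ↥posC1)} (hw : w ∈ sq2C) :
    phiMap x hx w = 0 := by
  have hle : sq2C ≤ AddMonoidHom.ker (phiMap x hx).toAddMonoidHom := by
    rw [sq2C]
    refine AddSubgroup.closure_le _ |>.2 ?_
    rintro w ⟨a, b, rfl⟩
    rw [SetLike.mem_coe, AddMonoidHom.mem_ker]; show Bmap x hx a b + Bmap x hx b a = 0
    simp only [SetLike.mem_coe, AddMonoidHom.mem_ker, LinearMap.toAddMonoidHom_coe,
      map_add, phiMap, TensorProduct.lift.tmul, Bmap, LinearMap.mk₂_apply]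
    ring
  exact AddMonoidHom.mem_ker.1 (hle hw)

end RogersAux

/-- If `f₁, …, f_N : [0,1] → (0,1)` are continuously differentiable and
`∑ᵢ fᵢ ⊗ (1 − fᵢ) ∈ S²C` in `C ⊗_ℤ C`, then `x ↦ ∑ᵢ L(fᵢ(x))` is constant on `[0,1]`. -/
theorem rogers_sum_constant (N : ℕ) (f : Fin N → ℝ → ℝ)
    (hf : ∀ i, ContDiffOn ℝ 1 (f i) (Set.Icc 0 1))
    (hrange : ∀ i, ∀ x ∈ Set.Icc (0:ℝ) 1, 0 < f i x ∧ f i x < 1)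
    (F G : Fin N → ↥posC1)
    (hF : ∀ i (x : ↥(Set.Icc (0:ℝ) 1)), (((F i : ↥(Set.Icc (0:ℝ) 1) → ℝˣ) x : ℝˣ) : ℝ) = f i x)
    (hG : ∀ i (x : ↥(Set.Icc (0:ℝ) 1)),
      (((G i : ↥(Set.Icc (0:ℝ) 1) → ℝˣ) x : ℝˣ) : ℝ) = 1 - f i x)
    (hten : (∑ i, Additive.ofMul (F i) ⊗ₜ[ℤ] Additive.ofMul (G i)) ∈ sq2C) :
    ∀ x ∈ Set.Icc (0:ℝ) 1, ∀ y ∈ Set.Icc (0:ℝ) 1,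
      ∑ i, rogersL (f i x) = ∑ i, rogersL (f i y) := by
  have hmem : ∀ i, ∀ t ∈ Set.Icc (0:ℝ) 1, f i t ∈ Set.Ioo (0:ℝ) 1 := fun i t ht =>
    ⟨(hrange i t ht).1, (hrange i t ht).2⟩
  set H : ℝ → ℝ := fun t => ∑ i, rogersL (f i t) with hH
  -- continuity of `H` on `[0,1]`
  have hHcont : ContinuousOn H (Set.Icc 0 1) := by
    refine continuousOn_finset_sum _ fun i _ => ?_
    exact continuousOn_rogersL.comp ((hf i).continuousOn) fun t ht => hmem i t ht
  -- zero right derivative on `[0,1)`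
  have hHderiv : ∀ t ∈ Set.Ico (0:ℝ) 1, HasDerivWithinAt H 0 (Set.Ici t) t := by
    intro t ht
    have ht' : t ∈ Set.Icc (0:ℝ) 1 := ⟨ht.1, ht.2.le⟩
    set d : Fin N → ℝ := fun i => derivWithin (f i) (Set.Icc 0 1) t with hd
    have hfd : ∀ i, HasDerivWithinAt (f i) (d i) (Set.Icc 0 1) t := fun i =>
      (((hf i).differentiableOn one_ne_zero) t ht').hasDerivWithinAt
    have hfi0 : ∀ i, 0 < f i t := fun i => (hrange i t ht').1
    have hfi1 : ∀ i, f i t < 1 := fun i => (hrange i t ht').2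
    -- the key vanishing identity coming from the tensor hypothesis
    have hkey : ∑ i, (LLhom t (Additive.ofMul (F i)) * DDhom t ht' (Additive.ofMul (G i))
        - LLhom t (Additive.ofMul (G i)) * DDhom t ht' (Additive.ofMul (F i))) = 0 := by
      have h0 := phi_vanish t ht' hten
      rw [map_sum] at h0
      exact h0
    -- values of LL and DD
    have hLLF : ∀ i, LLhom t (Additive.ofMul (F i)) = Real.log (f i t) := fun i => by
      simp only [LLhom, AddMonoidHom.mk'_apply, toMul_ofMul, lgC, dif_pos ht', hF i ⟨t, ht'⟩]
    have hLLG : ∀ i, LLhom t (Additive.ofMul (G i)) = Real.log (1 - f i t) := fun i => by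
      simp only [LLhom, AddMonoidHom.mk'_apply, toMul_ofMul, lgC, dif_pos ht', hG i ⟨t, ht'⟩]
    have hDDF : ∀ i, DDhom t ht' (Additive.ofMul (F i)) = (f i t)⁻¹ * d i := fun i => by
      simp only [DDhom, AddMonoidHom.mk'_apply, toMul_ofMul]
      exact lgC_derivWithin (F i) ht' (hF i) (hfd i) (hfi0 i)
    have hDDG : ∀ i, DDhom t ht' (Additive.ofMul (G i)) = (1 - f i t)⁻¹ * (-(d i)) :=
      fun i => by
      simp only [DDhom, AddMonoidHom.mk'_apply, toMul_ofMul]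
      exact lgC_derivWithin (G i) ht' (hG i) ((hfd i).const_sub 1)
        (by linarith [hfi1 i])
    -- derivative of H within Icc
    have hHIcc : HasDerivWithinAt H (∑ i, -(1/2) * rogersInt (f i t) * d i)
        (Set.Icc 0 1) t := by
      refine HasDerivWithinAt.fun_sum fun i _ => ?_
      have := (hasDerivAt_rogersL (hmem i t ht')).comp_hasDerivWithinAt t (hfd i)
      simpa [Function.comp_def, mul_assoc] using this
    have hzero : (∑ i, -(1/2) * rogersInt (f i t) * d i) = 0 := by
      have hterm : ∀ i, -(1/2 : ℝ) * rogersInt (f i t) * d i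
          = (1/2) * (LLhom t (Additive.ofMul (F i)) * DDhom t ht' (Additive.ofMul (G i))
            - LLhom t (Additive.ofMul (G i)) * DDhom t ht' (Additive.ofMul (F i))) := by
        intro i
        rw [hLLF i, hLLG i, hDDF i, hDDG i]
        unfold rogersInt
        have h1 : f i t ≠ 0 := (hfi0 i).ne'
        have h2 : (1:ℝ) - f i t ≠ 0 := by have := hfi1 i; intro h; linarith
        field_simp
        ring
      rw [Finset.sum_congr rfl fun i _ => hterm i, ← Finset.mul_sum, hkey, mul_zero]
    rw [hzero] at hHIcc
    exact hHIcc.mono_of_mem_nhdsWithin (Icc_mem_nhdsGE_of_mem ⟨ht.1, ht.2⟩)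
  -- conclude by the mean value theorem
  have hconst := constant_of_has_deriv_right_zero hHcont hHderiv
  intro x hx y hy
  have : H x = H y := by rw [hconst x hx, hconst y hy]
  simpa [hH] using this
end

section
/- Suppose f_1,...,f_N : [0,1] → (0,1) are continuously differentiable and there exist continuously differentiable nowhere-vanishing functions g_1,h_1,...,g_m,h_m : [0,1] → (0,∞) such that for all x,y in [0,1], ∑_{i=1}^N log f_i(x) log(1 - f_i(y)) = ∑_{j=1}^m (log g_j(x) log h_j(y) + log h_j(x) log g_j(y)). Then ∑_{i=1}^N L(f_i(0)) = ∑_{i=1}^N L(f_i(1)), where L is the Rogers dilogarithm. -/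
open scoped Real
open Set MeasureTheory intervalIntegral

noncomputable def phiR (t : ℝ) : ℝ := Real.log (1 - t) / t + Real.log t / (1 - t)

lemma phi_contOn : ContinuousOn phiR (Set.Ioo 0 1) := by
  apply ContinuousOn.add
  · exact (((continuous_const.sub continuous_id).continuousOn).log
      (fun t ht => by simp only [Set.mem_Ioo, id_eq, Pi.sub_apply] at *; nlinarith [ht.2])).div
      continuousOn_id (fun t ht => ne_of_gt ht.1)
  · exact (Real.continuousOn_log.mono (by intro t ht; simp only [Set.mem_compl_iff, Set.mem_singleton_iff]; exact ne_of_gt ht.1)).div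
      ((continuous_const.sub continuous_id).continuousOn) (fun t ht => by simp only [Set.mem_Ioo, id_eq] at *; nlinarith [ht.2])

lemma phi_intInt {z : ℝ} (h0 : 0 ≤ z) (h1 : z < 1) :
    IntervalIntegrable phiR MeasureTheory.volume 0 z := by
  rw [intervalIntegrable_iff_integrableOn_Ioc_of_le h0]
  set g : ℝ → ℝ := fun t => (1 - z)⁻¹ + (1 - z)⁻¹ * (2 * t ^ (-(1/2) : ℝ)) with hgdef
  have h1z : (0:ℝ) < 1 - z := by linarith
  have hgint : IntegrableOn g (Set.Ioc 0 z) := by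
    have h2 : IntervalIntegrable (fun t : ℝ => t ^ (-(1/2) : ℝ)) MeasureTheory.volume 0 z :=
      intervalIntegral.intervalIntegrable_rpow' (by norm_num)
    have h3 := (intervalIntegrable_const (c := (1-z)⁻¹)
        (μ := MeasureTheory.volume) (a := 0) (b := z)).add
      (((h2.const_mul 2).const_mul ((1-z)⁻¹)))
    rw [intervalIntegrable_iff_integrableOn_Ioc_of_le h0] at h3
    simpa [hgdef, mul_assoc] using h3
  refine MeasureTheory.Integrable.mono hgint ?_ ?_
  · apply Measurable.aestronglyMeasurable
    exact ((Real.measurable_log.comp (measurable_const.sub measurable_id)).div measurable_id).add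
      (Real.measurable_log.div (measurable_const.sub measurable_id))
  · rw [ae_restrict_iff' measurableSet_Ioc]
    filter_upwards with t ht
    obtain ⟨ht0, htz⟩ := ht
    have ht1 : t < 1 := lt_of_le_of_lt htz h1
    have h1t : 0 < 1 - t := by linarith
    have e1 : (1-t)*(1-t)⁻¹ = 1 := mul_inv_cancel₀ h1t.ne'
    have e2 : (1-z)*(1-z)⁻¹ = 1 := mul_inv_cancel₀ h1z.ne'
    have hi : (1-t)⁻¹ ≤ (1-z)⁻¹ := by
      apply inv_anti₀ h1z; linarith
    have hb1 : |Real.log (1 - t) / t| ≤ (1 - z)⁻¹ := by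
      have hlog : -Real.log (1 - t) ≤ (1-t)⁻¹ - 1 := by
        have := Real.log_le_sub_one_of_pos (inv_pos.mpr h1t)
        rwa [Real.log_inv] at this
      have habs : |Real.log (1 - t)| = -Real.log (1 - t) :=
        abs_of_nonpos (Real.log_nonpos (by linarith) (by linarith))
      rw [abs_div, habs, abs_of_pos ht0, div_le_iff₀ ht0]
      nlinarith [mul_le_mul_of_nonneg_left hi ht0.le]
    have hsq : Real.sqrt t > 0 := Real.sqrt_pos.mpr ht0
    have hrp : t ^ (-(1/2) : ℝ) = (Real.sqrt t)⁻¹ := by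
      rw [Real.rpow_neg ht0.le, ← Real.sqrt_eq_rpow]
    have hb2 : |Real.log t / (1 - t)| ≤ (1-z)⁻¹ * (2 * t ^ (-(1/2) : ℝ)) := by
      have hlt : -Real.log t ≤ 2 * (Real.sqrt t)⁻¹ := by
        have h4 := Real.log_le_sub_one_of_pos (inv_pos.mpr hsq)
        rw [Real.log_inv, Real.log_sqrt ht0.le] at h4
        nlinarith [inv_pos.mpr hsq]
      have habs : |Real.log t| = -Real.log t :=
        abs_of_nonpos (Real.log_nonpos ht0.le ht1.le)
      rw [abs_div, habs, abs_of_pos h1t, div_le_iff₀ h1t, hrp]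
      have hnn : (0:ℝ) ≤ 2 * (Real.sqrt t)⁻¹ := by positivity
      calc -Real.log t ≤ 2 * (Real.sqrt t)⁻¹ := hlt
        _ = (1-t)⁻¹ * (2 * (Real.sqrt t)⁻¹) * (1-t) := by
            field_simp
        _ ≤ (1-z)⁻¹ * (2 * (Real.sqrt t)⁻¹) * (1-t) := by
            apply mul_le_mul_of_nonneg_right (mul_le_mul_of_nonneg_right hi hnn) h1t.le
    have hgnn : (0:ℝ) ≤ g t := by
      have : (0:ℝ) ≤ t ^ (-(1/2):ℝ) := by positivity
      have := inv_pos.mpr h1z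
      positivity
    calc ‖phiR t‖ ≤ |Real.log (1-t)/t| + |Real.log t/(1-t)| := by
          simpa [phiR] using abs_add_le _ _
      _ ≤ (1-z)⁻¹ + (1-z)⁻¹ * (2 * t ^ (-(1/2):ℝ)) := add_le_add hb1 hb2
      _ = ‖g t‖ := by rw [Real.norm_eq_abs, abs_of_nonneg hgnn]

lemma rogersL_hasDerivAt {z : ℝ} (hz : z ∈ Set.Ioo (0:ℝ) 1) :
    HasDerivAt rogersL (-(1/2) * phiR z) z := by
  have h1 : HasDerivAt (fun w => ∫ t in (0:ℝ)..w, phiR t) (phiR z) z :=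
    intervalIntegral.integral_hasDerivAt_right (phi_intInt hz.1.le hz.2)
      (phi_contOn.stronglyMeasurableAtFilter isOpen_Ioo z hz)
      (phi_contOn.continuousAt (isOpen_Ioo.mem_nhds hz))
  have h2 := h1.const_mul (-(1/2) : ℝ)
  exact h2

/-- If `f₁, …, f_N : [0,1] → (0,1)` are continuously differentiable and there are
continuously differentiable nowhere-vanishing `g_j, h_j : [0,1] → (0,∞)` with
`∑ᵢ log fᵢ(x) log(1 − fᵢ(y)) = ∑ⱼ (log gⱼ(x) log hⱼ(y) + log hⱼ(x) log gⱼ(y))` for all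
`x, y ∈ [0,1]`, then `∑ᵢ L(fᵢ(0)) = ∑ᵢ L(fᵢ(1))`. -/
theorem rogers_sum_endpoints (N m : ℕ) (f : Fin N → ℝ → ℝ) (g h : Fin m → ℝ → ℝ)
    (hf : ∀ i, ContDiffOn ℝ 1 (f i) (Set.Icc 0 1))
    (hfrange : ∀ i, ∀ x ∈ Set.Icc (0:ℝ) 1, 0 < f i x ∧ f i x < 1)
    (hg : ∀ j, ContDiffOn ℝ 1 (g j) (Set.Icc 0 1))
    (hh : ∀ j, ContDiffOn ℝ 1 (h j) (Set.Icc 0 1))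
    (hgpos : ∀ j, ∀ x ∈ Set.Icc (0:ℝ) 1, 0 < g j x)
    (hhpos : ∀ j, ∀ x ∈ Set.Icc (0:ℝ) 1, 0 < h j x)
    (hsym : ∀ x ∈ Set.Icc (0:ℝ) 1, ∀ y ∈ Set.Icc (0:ℝ) 1,
      ∑ i, Real.log (f i x) * Real.log (1 - f i y)
        = ∑ j, (Real.log (g j x) * Real.log (h j y) + Real.log (h j x) * Real.log (g j y))) :
    ∑ i, rogersL (f i 0) = ∑ i, rogersL (f i 1) := by
  have hS : UniqueDiffOn ℝ (Set.Icc (0:ℝ) 1) := uniqueDiffOn_Icc one_pos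
  have hfd : ∀ i, DifferentiableOn ℝ (f i) (Set.Icc 0 1) := fun i => (hf i).differentiableOn one_ne_zero
  set d : Fin N → ℝ → ℝ := fun i x => derivWithin (f i) (Set.Icc 0 1) x with hd
  have hfD : ∀ i, ∀ x ∈ Set.Icc (0:ℝ) 1, HasDerivWithinAt (f i) (d i x) (Set.Icc 0 1) x :=
    fun i x hx => (hfd i x hx).hasDerivWithinAt
  have hu : ∀ i, ∀ x ∈ Set.Icc (0:ℝ) 1, HasDerivWithinAt (fun x => Real.log (f i x))
      ((f i x)⁻¹ * d i x) (Set.Icc 0 1) x := fun i x hx =>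
    (Real.hasDerivAt_log (hfrange i x hx).1.ne').comp_hasDerivWithinAt x (hfD i x hx)
  have hv : ∀ i, ∀ x ∈ Set.Icc (0:ℝ) 1, HasDerivWithinAt (fun x => Real.log (1 - f i x))
      ((1 - f i x)⁻¹ * (-d i x)) (Set.Icc 0 1) x := by
    intro i x hx
    have h1 : HasDerivWithinAt (fun x => 1 - f i x) (-d i x) (Set.Icc 0 1) x :=
      (hfD i x hx).const_sub 1
    have hne : (1 - f i x) ≠ 0 := by have := (hfrange i x hx).2; intro hc; linarith [hc]
    exact (Real.hasDerivAt_log hne).comp_hasDerivWithinAt x h1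
  -- symmetry of the bilinear expression
  have hsymm : ∀ x ∈ Set.Icc (0:ℝ) 1, ∀ y ∈ Set.Icc (0:ℝ) 1,
      ∑ i, Real.log (f i x) * Real.log (1 - f i y)
        = ∑ i, Real.log (f i y) * Real.log (1 - f i x) := by
    intro x hx y hy
    rw [hsym x hx y hy, hsym y hy x hx]
    exact Finset.sum_congr rfl fun j _ => by ring
  -- the key identity via differentiating the symmetry relation
  have key0 : ∀ x ∈ Set.Icc (0:ℝ) 1, ∀ y ∈ Set.Icc (0:ℝ) 1,
      ∑ i, (((f i x)⁻¹ * d i x) * Real.log (1 - f i y)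
        - Real.log (f i y) * ((1 - f i x)⁻¹ * (-d i x))) = 0 := by
    intro x hx y hy
    set P : ℝ → ℝ := fun x => ∑ i, (Real.log (f i x) * Real.log (1 - f i y)
        - Real.log (f i y) * Real.log (1 - f i x)) with hPdef
    have hP0 : ∀ t ∈ Set.Icc (0:ℝ) 1, P t = 0 := by
      intro t ht
      have := hsymm t ht y hy
      simp only [hPdef, Finset.sum_sub_distrib, this, sub_self]
    have hPd : HasDerivWithinAt P
        (∑ i, (((f i x)⁻¹ * d i x) * Real.log (1 - f i y)
          - Real.log (f i y) * ((1 - f i x)⁻¹ * (-d i x)))) (Set.Icc 0 1) x :=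
      HasDerivWithinAt.fun_sum fun i _ =>
        ((hu i x hx).mul_const _).sub ((hv i x hx).const_mul _)
    have hPz : HasDerivWithinAt P 0 (Set.Icc 0 1) x :=
      (hasDerivWithinAt_const x _ (0:ℝ)).congr (fun t ht => hP0 t ht) (hP0 x hx)
    have := hPd.derivWithin (hS x hx)
    rw [hPz.derivWithin (hS x hx)] at this
    exact this.symm
  -- the total derivative vanishes
  have hF0 : ∀ x ∈ Set.Icc (0:ℝ) 1,
      HasDerivWithinAt (fun x => ∑ i, rogersL (f i x)) 0 (Set.Icc 0 1) x := by
    intro x hx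
    have hterm : ∀ i, HasDerivWithinAt (fun x => rogersL (f i x))
        ((-(1/2) * phiR (f i x)) * d i x) (Set.Icc 0 1) x := fun i =>
      (rogersL_hasDerivAt ⟨(hfrange i x hx).1, (hfrange i x hx).2⟩).comp_hasDerivWithinAt x
        (hfD i x hx)
    have hsum := HasDerivWithinAt.fun_sum fun i (_ : i ∈ Finset.univ) => hterm i
    have hzero : ∑ i, (-(1/2) * phiR (f i x)) * d i x = 0 := by
      have hk := key0 x hx x hx
      have he : ∑ i, (-(1/2) * phiR (f i x)) * d i x
          = -(1/2) * ∑ i, (((f i x)⁻¹ * d i x) * Real.log (1 - f i x)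
            - Real.log (f i x) * ((1 - f i x)⁻¹ * (-d i x))) := by
        rw [Finset.mul_sum]
        refine Finset.sum_congr rfl fun i _ => ?_
        simp only [phiR, div_eq_mul_inv]
        ring
      rw [he, hk, mul_zero]
    rw [hzero] at hsum
    exact hsum
  have hdiff : DifferentiableOn ℝ (fun x => ∑ i, rogersL (f i x)) (Set.Icc 0 1) :=
    fun x hx => (hF0 x hx).differentiableWithinAt
  have hder : ∀ x ∈ Set.Ico (0:ℝ) 1,
      derivWithin (fun x => ∑ i, rogersL (f i x)) (Set.Icc 0 1) x = 0 := fun x hx =>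
    (hF0 x (Set.Ico_subset_Icc_self hx)).derivWithin (hS x (Set.Ico_subset_Icc_self hx))
  have := constant_of_derivWithin_zero hdiff hder 1 (by norm_num)
  simpa using this.symm
end

section
/- For each n ≥ 1 and each i ∈ ℤ, the numbers X(i,j)₀ = 1 − sin²(π/(n+3))/sin²(π(j+1)/(n+3)) for 1 ≤ j ≤ n (constant in i), together with X(i,0)₀ = X(i,n+1)₀ = 0, satisfy the constant X-system: X(i,j)₀² = ∏_{l=1}^n (1 − X(i,l)₀)^{A_{jl}}, where (A_{jl}) is the A_n Cartan matrix, equivalently X(i,j)₀² = (1 − X(i,j−1)₀)(1 − X(i,j+1)₀); moreover each X(i,j)₀ ∈ (0,1). -/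
set_option maxHeartbeats 1000000


open scoped Real

lemma aux_sin_prod (A B : ℝ) :
    Real.sin (A - B) * Real.sin (A + B) = Real.sin A ^ 2 - Real.sin B ^ 2 := by
  rw [Real.sin_sub, Real.sin_add]
  have hA := Real.sin_sq_add_cos_sq A
  have hB := Real.sin_sq_add_cos_sq B
  nlinarith [hA, hB]

lemma aux_sin_lt {θ a : ℝ} (h1 : 0 < θ) (h4 : θ < π / 2) (h2 : θ < a) (h3 : a < π - θ) :
    Real.sin θ < Real.sin a := by
  rcases le_or_gt a (π / 2) with h | h
  · exact Real.sin_lt_sin_of_lt_of_le_pi_div_two (by linarith) h h2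
  · rw [← Real.sin_pi_sub a]
    exact Real.sin_lt_sin_of_lt_of_le_pi_div_two (by linarith) (by linarith) (by linarith)

/-- The constant (`i`-independent) values
`x_j = 1 − sin²(π/(n+3))/sin²(π(j+1)/(n+3))`, `1 ≤ j ≤ n`
(with `x_0 = x_{n+1} = 0`), lie in `(0,1)` and satisfy the constant specialization of the
X-system: `(1 − 1/x_j)² = (1 − x_{j−1})(1 − x_{j+1})`, equivalently (Cartan-matrix form)
`x_j² · (1 − x_{j−1})(1 − x_{j+1}) = (1 − x_j)²`, i.e. `x_j² = ∏_l (1 − x_l)^{A_{jl}}`. -/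
theorem constant_x_system_solution (n : ℕ) (hn : 1 ≤ n) :
    ∀ x : ℕ → ℝ,
      (∀ j, x j = 1 - Real.sin (π / (n + 3)) ^ 2 / Real.sin (π * (j + 1) / (n + 3)) ^ 2) →
      x 0 = 0 ∧ x (n + 1) = 0 ∧
      ∀ j, 1 ≤ j → j ≤ n →
        (0 < x j ∧ x j < 1) ∧
        (1 - 1 / x j) ^ 2 = (1 - x (j - 1)) * (1 - x (j + 1)) ∧
        x j ^ 2 * ((1 - x (j - 1)) * (1 - x (j + 1))) = (1 - x j) ^ 2 := by
  intro x hx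
  have hπ := Real.pi_pos
  have hN : (0:ℝ) < (n:ℝ) + 3 := by positivity
  set θ := π / ((n:ℝ) + 3) with hθdef
  have hθpos : 0 < θ := by positivity
  have hn' : (1:ℝ) ≤ (n:ℝ) := by exact_mod_cast hn
  have hθlt : θ < π / 2 := by
    rw [hθdef, div_lt_div_iff₀ hN (by norm_num)]
    nlinarith
  -- rewrite x in terms of θ
  have hx' : ∀ j : ℕ, x j = 1 - Real.sin θ ^ 2 / Real.sin (((j:ℝ) + 1) * θ) ^ 2 := by
    intro j
    rw [hx j, hθdef]
    congr 2
    ring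
  -- positivity of sin (k θ) for 1 ≤ k ≤ n+2
  have hsinpos : ∀ k : ℕ, 1 ≤ k → k ≤ n + 2 → 0 < Real.sin ((k:ℝ) * θ) := by
    intro k hk1 hk2
    have hk1' : (1:ℝ) ≤ (k:ℝ) := by exact_mod_cast hk1
    have hk2' : (k:ℝ) ≤ (n:ℝ) + 2 := by exact_mod_cast hk2
    apply Real.sin_pos_of_pos_of_lt_pi
    · positivity
    · rw [hθdef]
      rw [mul_div_assoc', div_lt_iff₀ hN]
      nlinarith
  -- sin θ < sin ((j+1) θ) for 1 ≤ j ≤ n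
  have hsingt : ∀ j : ℕ, 1 ≤ j → j ≤ n → Real.sin θ < Real.sin (((j:ℝ) + 1) * θ) := by
    intro j hj1 hj2
    have hj1' : (1:ℝ) ≤ (j:ℝ) := by exact_mod_cast hj1
    have hj2' : (j:ℝ) ≤ (n:ℝ) := by exact_mod_cast hj2
    apply aux_sin_lt hθpos hθlt
    · nlinarith
    · have : θ * ((n:ℝ) + 3) = π := by
        rw [hθdef]; field_simp
      nlinarith
  have hsinθ : 0 < Real.sin θ := by
    have := hsinpos 1 le_rfl (by omega)
    simpa using this
  refine ⟨?_, ?_, ?_⟩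
  · rw [hx' 0]
    simp only [Nat.cast_zero, zero_add, one_mul]
    have h1 : Real.sin θ ≠ 0 := ne_of_gt hsinθ
    field_simp
    ring
  · rw [hx' (n+1)]
    have : (((n + 1 : ℕ):ℝ) + 1) * θ = π - θ := by
      push_cast
      rw [hθdef]
      field_simp
      ring
    rw [this, Real.sin_pi_sub]
    field_simp
    ring
  · intro j hj1 hj2
    set s0 := Real.sin θ with hs0
    set s1 := Real.sin ((j:ℝ) * θ) with hs1
    set s2 := Real.sin (((j:ℝ) + 1) * θ) with hs2
    set s3 := Real.sin (((j:ℝ) + 2) * θ) with hs3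
    have hs1pos : 0 < s1 := by
      have := hsinpos j hj1 (by omega); exact this
    have hs2pos : 0 < s2 := by
      have := hsinpos (j+1) (by omega) (by omega)
      rw [hs2]; convert this using 3; push_cast; ring
    have hs3pos : 0 < s3 := by
      have := hsinpos (j+2) (by omega) (by omega)
      rw [hs3]; convert this using 3; push_cast; ring
    have hlt : s0 < s2 := hsingt j hj1 hj2
    clear_value s0 s1 s2 s3
    have hkey : s1 * s3 = s2 ^ 2 - s0 ^ 2 := by
      have := aux_sin_prod (((j:ℝ) + 1) * θ) θ
      rw [hs1, hs3, hs2, hs0]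
      convert this using 3 <;> ring
    -- express x values
    have hxj : x j = 1 - s0 ^ 2 / s2 ^ 2 := by rw [hx' j, ← hs2]
    have hxjm : x (j - 1) = 1 - s0 ^ 2 / s1 ^ 2 := by
      rw [hx' (j-1)]
      have : ((j - 1 : ℕ):ℝ) + 1 = (j:ℝ) := by
        have : ((j - 1 : ℕ):ℝ) = (j:ℝ) - 1 := by
          push_cast [Nat.cast_sub hj1]; ring
        rw [this]; ring
      rw [this, ← hs1]
    have hxjp : x (j + 1) = 1 - s0 ^ 2 / s3 ^ 2 := by
      rw [hx' (j+1)]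
      have : ((j + 1 : ℕ):ℝ) + 1 = (j:ℝ) + 2 := by push_cast; ring
      rw [this, ← hs3]
    have hsq : s0 ^ 2 < s2 ^ 2 := by nlinarith
    have hxjpos : 0 < x j := by
      rw [hxj]
      have : s0 ^ 2 / s2 ^ 2 < 1 := by
        rw [div_lt_one (by positivity)]; exact hsq
      linarith
    have hxjne : x j ≠ 0 := ne_of_gt hxjpos
    have hd : s2 ^ 2 - s0 ^ 2 ≠ 0 := by nlinarith
    have heq2 : (1 - 1 / x j) ^ 2 = (1 - x (j - 1)) * (1 - x (j + 1)) := by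
      rw [hxj, hxjm, hxjp]
      have h2 : s2 ≠ 0 := ne_of_gt hs2pos
      have h1 : s1 ≠ 0 := ne_of_gt hs1pos
      have h3 : s3 ≠ 0 := ne_of_gt hs3pos
      have hxjne' : 1 - s0 ^ 2 / s2 ^ 2 ≠ 0 := by rw [← hxj]; exact hxjne
      have h13 : s1 ^ 2 * s3 ^ 2 = (s2 ^ 2 - s0 ^ 2) ^ 2 := by nlinarith [hkey]
      have hlhs : 1 - 1 / (1 - s0 ^ 2 / s2 ^ 2) = -(s0 ^ 2) / (s2 ^ 2 - s0 ^ 2) := by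
        field_simp
        ring
      have hrhs : (1 - (1 - s0 ^ 2 / s1 ^ 2)) * (1 - (1 - s0 ^ 2 / s3 ^ 2))
          = (s0 ^ 2) ^ 2 / (s1 ^ 2 * s3 ^ 2) := by
        field_simp
        ring
      rw [hlhs, hrhs, h13, div_pow, neg_sq]
    refine ⟨⟨hxjpos, ?_⟩, heq2, ?_⟩
    · rw [hxj]
      have : 0 < s0 ^ 2 / s2 ^ 2 := by positivity
      linarith
    · have : x j ^ 2 * ((1 - x (j - 1)) * (1 - x (j + 1))) = x j ^ 2 * (1 - 1 / x j) ^ 2 := by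
        rw [heq2]
      rw [this]
      field_simp
      ring
end

section
/- For every integer n ≥ 1, ∑_{j=1}^n L( sin²(π/(n+3)) / sin²(π(j+1)/(n+3)) ) = (π²/6)·(2n/(n+3)), where L is the Rogers dilogarithm. -/
open scoped Real

open Set MeasureTheory intervalIntegral
open scoped Topology

noncomputable def rIntegrand (t : ℝ) : ℝ := Real.log (1 - t) / t + Real.log t / (1 - t)

lemma rIntegrand_symm (t : ℝ) : rIntegrand (1 - t) = rIntegrand t := by
  simp only [rIntegrand, sub_sub_cancel]; ring

lemma neg_log_le (t : ℝ) (ht : 0 < t) : -Real.log t ≤ 2 * t ^ (-(1/2) : ℝ) := by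
  have h1 : Real.log (t ^ (-(1/2) : ℝ)) ≤ t ^ (-(1/2) : ℝ) - 1 :=
    Real.log_le_sub_one_of_pos (Real.rpow_pos_of_pos ht _)
  rw [Real.log_rpow ht] at h1
  nlinarith [Real.rpow_pos_of_pos ht (-(1/2) : ℝ)]

lemma neg_log_one_sub_le (t : ℝ) (ht : t < 1) : -Real.log (1 - t) ≤ t / (1 - t) := by
  have hpos : (0:ℝ) < 1 - t := by linarith
  have h1 : Real.log (1 - t) ≥ 1 - 1/(1-t) := by
    have := Real.log_le_sub_one_of_pos (x := 1/(1-t)) (by positivity)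
    rw [Real.log_div one_ne_zero (by linarith), Real.log_one] at this
    linarith
  have h2 : 1 - 1/(1-t) = -(t/(1-t)) := by field_simp; ring
  linarith [h2 ▸ h1]

lemma rIntegrand_bound_left {t : ℝ} (ht : t ∈ Ioc (0:ℝ) (1/2)) :
    ‖rIntegrand t‖ ≤ 6 * t ^ (-(1/2) : ℝ) := by
  obtain ⟨h0, h1⟩ := ht
  have h1' : t < 1 := by linarith
  have hpow : (1:ℝ) ≤ t ^ (-(1/2) : ℝ) :=
    Real.one_le_rpow_of_pos_of_le_one_of_nonpos h0 (by linarith) (by norm_num)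
  have hA : |Real.log (1 - t) / t| ≤ 2 := by
    rw [abs_div, abs_of_pos h0]
    have hlog : |Real.log (1 - t)| ≤ 2 * t := by
      rw [abs_of_nonpos (Real.log_nonpos (by linarith) (by linarith))]
      calc -Real.log (1 - t) ≤ t / (1 - t) := neg_log_one_sub_le t h1'
        _ ≤ 2 * t := by rw [div_le_iff₀ (by linarith)]; nlinarith
    rw [div_le_iff₀ h0]; linarith
  have hB : |Real.log t / (1 - t)| ≤ 4 * t ^ (-(1/2) : ℝ) := by
    rw [abs_div, abs_of_pos (by linarith : (0:ℝ) < 1 - t)]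
    have hlog : |Real.log t| ≤ 2 * t ^ (-(1/2) : ℝ) := by
      rw [abs_of_nonpos (Real.log_nonpos h0.le h1'.le)]
      exact neg_log_le t h0
    rw [div_le_iff₀ (by linarith : (0:ℝ) < 1 - t)]
    nlinarith [Real.rpow_pos_of_pos h0 (-(1/2):ℝ)]
  calc ‖rIntegrand t‖ ≤ |Real.log (1 - t) / t| + |Real.log t / (1 - t)| := abs_add_le _ _
    _ ≤ 6 * t ^ (-(1/2) : ℝ) := by linarith

lemma rIntegrand_contOn : ContinuousOn rIntegrand (Ioo (0:ℝ) 1) := by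
  intro x hx
  have h0 : x ≠ 0 := ne_of_gt hx.1
  have h1 : (1:ℝ) - x ≠ 0 := by have := hx.2; intro h; linarith [sub_eq_zero.mp h]
  apply ContinuousWithinAt.add
  · exact (((Real.continuousAt_log h1).comp (by fun_prop)).div continuousAt_id h0).continuousWithinAt
  · exact ((Real.continuousAt_log h0).div (by fun_prop) h1).continuousWithinAt

lemma rIntegrand_integrableOn_left : IntegrableOn rIntegrand (Ioc (0:ℝ) (1/2)) := by
  have hmeas : AEStronglyMeasurable rIntegrand (volume.restrict (Ioc (0:ℝ) (1/2))) :=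
    (rIntegrand_contOn.mono (by intro x hx; exact ⟨hx.1, by linarith [hx.2]⟩)).aestronglyMeasurable
      measurableSet_Ioc
  have hg : IntegrableOn (fun t : ℝ => 6 * t ^ (-(1/2) : ℝ)) (Ioc (0:ℝ) (1/2)) := by
    have := (intervalIntegrable_rpow' (a := 0) (b := 1/2) (r := (-(1/2):ℝ)) (by norm_num)).const_mul 6
    rw [intervalIntegrable_iff_integrableOn_Ioc_of_le (by norm_num)] at this
    exact this
  exact Integrable.mono' hg hmeas
    (Filter.eventually_of_mem (self_mem_ae_restrict measurableSet_Ioc)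
      (fun t ht => rIntegrand_bound_left ht))

lemma rogersL_def (z : ℝ) : rogersL z = -(1/2) * ∫ t in (0:ℝ)..z, rIntegrand t := rfl

lemma rogersL_zero : rogersL 0 = 0 := by simp [rogersL]

lemma rIntegrand_integrableOn : IntegrableOn rIntegrand (Ioc (0:ℝ) 1) := by
  have hL := rIntegrand_integrableOn_left
  have hIl : IntervalIntegrable rIntegrand volume 0 (1/2) :=
    (intervalIntegrable_iff_integrableOn_Ioc_of_le (by norm_num)).mpr hL
  have hIr : IntervalIntegrable rIntegrand volume (1/2) 1 := by
    have := (hIl.comp_sub_left 1).symm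
    simp only [sub_zero, show (1:ℝ) - 1/2 = 1/2 by norm_num] at this
    exact this.congr (g := rIntegrand)
      (fun x _ => rIntegrand_symm x)
  have hR : IntegrableOn rIntegrand (Ioc (1/2:ℝ) 1) :=
    (intervalIntegrable_iff_integrableOn_Ioc_of_le (by norm_num)).mp hIr
  have := hL.union hR
  rwa [Set.Ioc_union_Ioc_eq_Ioc (by norm_num) (by norm_num)] at this

lemma rIntegrand_intervalIntegrable {z : ℝ} (h0 : 0 ≤ z) (h1 : z ≤ 1) :
    IntervalIntegrable rIntegrand volume 0 z := by
  rw [intervalIntegrable_iff_integrableOn_Ioc_of_le h0]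
  exact rIntegrand_integrableOn.mono_set (Ioc_subset_Ioc le_rfl h1)

lemma rogersL_continuousOn : ContinuousOn rogersL (Icc (0:ℝ) 1) := by
  have hInt : IntegrableOn rIntegrand (Icc (0:ℝ) 1) := by
    rw [integrableOn_Icc_iff_integrableOn_Ioc]; exact rIntegrand_integrableOn
  have h := (intervalIntegral.continuousOn_primitive hInt).const_smul (-(1/2:ℝ))
  apply h.congr
  intro x hx
  rw [rogersL_def, intervalIntegral.integral_of_le hx.1]
  simp [smul_eq_mul]

lemma hasDerivAt_rogersL_s12 {x : ℝ} (hx : x ∈ Ioo (0:ℝ) 1) :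
    HasDerivAt rogersL (-(1/2) * rIntegrand x) x := by
  have H := intervalIntegral.integral_hasDerivAt_right
    (rIntegrand_intervalIntegrable hx.1.le hx.2.le)
    (rIntegrand_contOn.stronglyMeasurableAtFilter isOpen_Ioo x hx)
    ((rIntegrand_contOn x hx).continuousAt (isOpen_Ioo.mem_nhds hx))
  exact H.const_mul (-(1/2))

open scoped Real
open Set MeasureTheory intervalIntegral

lemma basel : HasSum (fun k : ℕ => (1:ℝ)/((k:ℝ)+1)^2) (π^2/6) := by
  have h := (hasSum_nat_add_iff (f := fun n : ℕ => (1:ℝ)/(n:ℝ)^2) 1).mpr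
    (by simpa using hasSum_zeta_two)
  convert h using 2 with k
  · rfl
  push_cast
  ring

lemma g2_integrable : IntervalIntegrable (fun t : ℝ => Real.log t / (1 - t)) volume 0 1 := by
  rw [intervalIntegrable_iff_integrableOn_Ioc_of_le zero_le_one]
  have hcont : ContinuousOn (fun t : ℝ => Real.log t / (1 - t)) (Ioo (0:ℝ) 1) := by
    intro x hx
    have h0 : x ≠ 0 := ne_of_gt hx.1
    have h1 : (1:ℝ) - x ≠ 0 := by have := hx.2; intro h; linarith [sub_eq_zero.mp h]
    exact ((Real.continuousAt_log h0).div (by fun_prop) h1).continuousWithinAt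
  have hL : IntegrableOn (fun t : ℝ => Real.log t / (1 - t)) (Ioc (0:ℝ) (1/2)) := by
    have hmeas : AEStronglyMeasurable (fun t : ℝ => Real.log t / (1 - t))
        (volume.restrict (Ioc (0:ℝ) (1/2))) :=
      (hcont.mono (fun x hx => ⟨hx.1, by linarith [hx.2]⟩)).aestronglyMeasurable measurableSet_Ioc
    have hg : IntegrableOn (fun t : ℝ => 4 * t ^ (-(1/2) : ℝ)) (Ioc (0:ℝ) (1/2)) := by
      have := (intervalIntegrable_rpow' (a := 0) (b := 1/2) (r := (-(1/2):ℝ)) (by norm_num)).const_mul 4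
      rw [intervalIntegrable_iff_integrableOn_Ioc_of_le (by norm_num)] at this
      exact this
    refine Integrable.mono' hg hmeas
      (Filter.eventually_of_mem (self_mem_ae_restrict measurableSet_Ioc) (fun t ht => ?_))
    obtain ⟨h0, h1⟩ := ht
    rw [norm_div, Real.norm_eq_abs, Real.norm_eq_abs, abs_of_pos (by linarith : (0:ℝ) < 1 - t),
      abs_of_nonpos (Real.log_nonpos h0.le (by linarith))]
    rw [div_le_iff₀ (by linarith : (0:ℝ) < 1 - t)]
    nlinarith [neg_log_le t h0, Real.rpow_pos_of_pos h0 (-(1/2):ℝ)]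
  have hR : IntegrableOn (fun t : ℝ => Real.log t / (1 - t)) (Ioo (1/2:ℝ) 1) := by
    have hmeas : AEStronglyMeasurable (fun t : ℝ => Real.log t / (1 - t))
        (volume.restrict (Ioo (1/2:ℝ) 1)) :=
      (hcont.mono (fun x hx => ⟨by linarith [hx.1], hx.2⟩)).aestronglyMeasurable measurableSet_Ioo
    refine Integrable.mono' (g := fun _ : ℝ => (2:ℝ))
      (integrableOn_const (by simp)) hmeas
      (Filter.eventually_of_mem (self_mem_ae_restrict measurableSet_Ioo) (fun t ht => ?_))
    obtain ⟨h0, h1⟩ := ht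
    have hlog : -Real.log t ≤ (1 - t)/t := by
      have h := Real.log_le_sub_one_of_pos (x := 1/t) (by positivity)
      rw [Real.log_div one_ne_zero (by linarith), Real.log_one] at h
      have h2 : -Real.log t ≤ 1/t - 1 := by linarith
      calc -Real.log t ≤ 1/t - 1 := h2
        _ = (1-t)/t := by field_simp
    have h3 : (1-t)/t ≤ 2*(1-t) := by
      rw [div_le_iff₀ (by linarith)]; nlinarith
    rw [norm_div, Real.norm_eq_abs, Real.norm_eq_abs, abs_of_pos (by linarith : (0:ℝ) < 1 - t),
      abs_of_nonpos (Real.log_nonpos (by linarith) h1.le),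
      div_le_iff₀ (by linarith : (0:ℝ) < 1 - t)]
    show -Real.log t ≤ 2 * (1 - t)
    linarith
  have hR' : IntegrableOn (fun t : ℝ => Real.log t / (1 - t)) (Ioc (1/2:ℝ) 1) :=
    (integrableOn_Ioc_iff_integrableOn_Ioo).mpr hR
  have := hL.union hR'
  rwa [Set.Ioc_union_Ioc_eq_Ioc (by norm_num) (by norm_num)] at this

open scoped Real
open Set MeasureTheory intervalIntegral

lemma g1_integral : ∫ t in (0:ℝ)..1, Real.log (1-t) / t = -(π^2/6) := by
  have hle : (0:ℝ) ≤ 1 := zero_le_one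
  rw [intervalIntegral.integral_of_le hle, MeasureTheory.integral_Ioc_eq_integral_Ioo]
  set μ := volume.restrict (Ioo (0:ℝ) 1) with hμ
  have hInt : ∀ k : ℕ, Integrable (fun t : ℝ => -(t^k / ((k:ℝ)+1))) μ := by
    intro k
    have h1 : IntegrableOn (fun t : ℝ => t^k) (Ioo (0:ℝ) 1) :=
      ((intervalIntegral.intervalIntegrable_pow k (a := 0) (b := 1)).def' ).mono_set
        (by rw [uIoc_of_le hle]; exact Ioo_subset_Ioc_self)
    exact ((h1.div_const _).neg)
  have hIval : ∀ k : ℕ, ∫ t, -(t^k / ((k:ℝ)+1)) ∂μ = -(1/((k:ℝ)+1)^2) := by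
    intro k
    rw [hμ, ← MeasureTheory.integral_Ioc_eq_integral_Ioo,
      ← intervalIntegral.integral_of_le hle]
    rw [intervalIntegral.integral_neg, intervalIntegral.integral_div, integral_pow]
    push_cast
    field_simp
    ring
  have hnorm : ∀ k : ℕ, ∫ t, ‖-(t^k / ((k:ℝ)+1))‖ ∂μ = 1/((k:ℝ)+1)^2 := by
    intro k
    have habs : ∀ t ∈ Ioo (0:ℝ) 1, ‖-(t^k / ((k:ℝ)+1))‖ = t^k / ((k:ℝ)+1) := by
      intro t ht
      rw [norm_neg, Real.norm_eq_abs,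
        abs_of_nonneg (div_nonneg (pow_nonneg ht.1.le k) (by positivity))]
    rw [MeasureTheory.setIntegral_congr_fun measurableSet_Ioo habs,
      ← MeasureTheory.integral_Ioc_eq_integral_Ioo, ← intervalIntegral.integral_of_le hle,
      intervalIntegral.integral_div, integral_pow]
    push_cast
    field_simp
    ring
  have hsum : Summable (fun k : ℕ => ∫ t, ‖-(t^k / ((k:ℝ)+1))‖ ∂μ) :=
    Summable.congr basel.summable (fun k => (hnorm k).symm)
  have key := MeasureTheory.hasSum_integral_of_summable_integral_norm
    (F := fun (k:ℕ) (t:ℝ) => -(t^k / ((k:ℝ)+1))) (μ := μ) hInt hsum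
  have hps : ∀ t ∈ Ioo (0:ℝ) 1, (∑' k : ℕ, -(t^k / ((k:ℝ)+1))) = Real.log (1-t) / t := by
    intro t ht
    have ht0 : t ≠ 0 := ne_of_gt ht.1
    have habs : |t| < 1 := by rw [abs_of_pos ht.1]; exact ht.2
    have h3 := (Real.hasSum_pow_div_log_of_abs_lt_one habs).div_const t
    have hfun : (fun k : ℕ => t^(k+1) / ((k:ℝ)+1) / t) = (fun k : ℕ => t^k / ((k:ℝ)+1)) := by
      funext k; rw [pow_succ]; field_simp
    rw [hfun] at h3
    rw [h3.neg.tsum_eq]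
    ring
  have hcongr : ∫ t, (∑' k : ℕ, -(t^k / ((k:ℝ)+1))) ∂μ = ∫ t, Real.log (1-t) / t ∂μ :=
    MeasureTheory.setIntegral_congr_fun measurableSet_Ioo hps
  rw [hcongr] at key
  have hIv : (fun k : ℕ => ∫ t, -(t^k / ((k:ℝ)+1)) ∂μ) = fun k : ℕ => -(1/((k:ℝ)+1)^2) :=
    funext hIval
  rw [hIv] at key
  exact key.unique basel.neg

open scoped Real
open Set MeasureTheory intervalIntegral

lemma g1_intervalIntegrable : IntervalIntegrable (fun t : ℝ => Real.log (1-t) / t) volume 0 1 := by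
  have h := (rIntegrand_intervalIntegrable (z := 1) zero_le_one le_rfl).sub g2_integrable
  exact h.congr (fun x _ => by simp [rIntegrand])

lemma rogersL_one : rogersL 1 = π^2/6 := by
  have h2eq1 : ∫ t in (0:ℝ)..1, Real.log t / (1-t) = ∫ t in (0:ℝ)..1, Real.log (1-t) / t := by
    have h := intervalIntegral.integral_comp_sub_left (a := 0) (b := 1)
      (fun t : ℝ => Real.log t / (1-t)) 1
    simp only [sub_zero, sub_self] at h
    rw [← h]
    apply intervalIntegral.integral_congr
    intro x _
    simp only [sub_sub_cancel]
  have hsplit : ∫ t in (0:ℝ)..1, rIntegrand t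
      = (∫ t in (0:ℝ)..1, Real.log (1-t) / t) + ∫ t in (0:ℝ)..1, Real.log t / (1-t) := by
    rw [← intervalIntegral.integral_add g1_intervalIntegrable g2_integrable]
    rfl
  rw [rogersL_def, hsplit, h2eq1, g1_integral]
  ring

open scoped Topology
open scoped Real
open Set MeasureTheory intervalIntegral

lemma const_of_deriv_zero {Φ : ℝ → ℝ} {b : ℝ} (hb : 0 < b)
    (hc : ContinuousOn Φ (Icc 0 b)) (hd : ∀ t ∈ Ioo (0:ℝ) b, HasDerivAt Φ 0 t) :
    Φ b = Φ 0 := by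
  have key : ∀ t ∈ Ioc (0:ℝ) b, Φ b = Φ t := by
    intro t ht
    rcases eq_or_lt_of_le ht.2 with h|h
    · rw [h]
    · have hCD := constant_of_has_deriv_right_zero (f := Φ) (a := t) (b := b)
        (hc.mono (Icc_subset_Icc ht.1.le le_rfl))
        (fun u hu => (hd u ⟨lt_of_lt_of_le ht.1 hu.1, hu.2⟩).hasDerivWithinAt)
      exact hCD b (right_mem_Icc.mpr ht.2)
  have hne : (𝓝[Ioc (0:ℝ) b] 0).NeBot := by
    apply mem_closure_iff_nhdsWithin_neBot.mp
    rw [closure_Ioc hb.ne]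
    exact ⟨le_rfl, hb.le⟩
  have h1 : Filter.Tendsto Φ (𝓝[Ioc (0:ℝ) b] 0) (𝓝 (Φ 0)) :=
    (hc.continuousWithinAt (left_mem_Icc.mpr hb.le)).mono_left
      (nhdsWithin_mono 0 Ioc_subset_Icc_self)
  have h2 : Filter.Tendsto Φ (𝓝[Ioc (0:ℝ) b] 0) (𝓝 (Φ b)) := by
    apply Filter.Tendsto.congr' ?_ tendsto_const_nhds
    exact Filter.eventuallyEq_of_mem self_mem_nhdsWithin (fun t ht => key t ht)
  exact tendsto_nhds_unique h2 h1

lemma rogersL_reflect {x : ℝ} (h0 : 0 ≤ x) (h1 : x ≤ 1) :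
    rogersL x + rogersL (1 - x) = π^2/6 := by
  rcases eq_or_lt_of_le h0 with h|h0'
  · rw [← h]; simp [rogersL_zero, rogersL_one]
  · have key := const_of_deriv_zero (Φ := fun x => rogersL x + rogersL (1-x)) h0'
      (by
        apply ContinuousOn.add
        · exact rogersL_continuousOn.mono (Icc_subset_Icc le_rfl h1)
        · apply rogersL_continuousOn.comp (Continuous.continuousOn (by fun_prop))
          intro u hu
          exact ⟨by linarith [hu.2], by linarith [hu.1]⟩)
      (by
        intro t ht
        have ht1 : t ∈ Ioo (0:ℝ) 1 := ⟨ht.1, lt_of_lt_of_le ht.2 h1⟩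
        have hA := hasDerivAt_rogersL_s12 ht1
        have hB := (hasDerivAt_rogersL_s12 (x := 1 - t)
            ⟨by linarith [ht1.2], by linarith [ht1.1]⟩).comp t ((hasDerivAt_id t).const_sub 1)
        have hsum := hA.add hB
        refine hsum.congr_deriv (Eq.symm ?_)
        rw [rIntegrand_symm t]
        ring)
    simp only [sub_zero, sub_self] at key
    rw [key, rogersL_zero, rogersL_one]
    ring

open scoped Topology
open scoped Real
open Set MeasureTheory intervalIntegral

lemma abel_log_identity {t y : ℝ} (ht0 : 0 < t) (ht1 : t < 1) (hy0 : 0 < y) (hy1 : y < 1) :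
    -(1/2)*rIntegrand (t*y)*y + (-(1/2)*rIntegrand (t*(1-y)/(1-t*y)))*((1-y)/(1-t*y)^2)
      + (-(1/2)*rIntegrand (y*(1-t)/(1-t*y)))*(-(y*(1-y))/(1-t*y)^2)
      - (-(1/2)*rIntegrand t) = 0 := by
  have hD : 0 < 1 - t*y := by nlinarith
  have ht1' : (0:ℝ) < 1 - t := by linarith
  have hy1' : (0:ℝ) < 1 - y := by linarith
  have e2 : 1 - t*(1-y)/(1-t*y) = (1-t)/(1-t*y) := by field_simp; ring
  have e3 : 1 - y*(1-t)/(1-t*y) = (1-y)/(1-t*y) := by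
    rw [eq_div_iff hD.ne', sub_mul, div_mul_cancel₀ _ hD.ne']; ring
  have l1 : Real.log (t*y) = Real.log t + Real.log y := Real.log_mul (ne_of_gt ht0) (ne_of_gt hy0)
  have l2 : Real.log (t*(1-y)/(1-t*y)) = Real.log t + Real.log (1-y) - Real.log (1-t*y) := by
    rw [Real.log_div (by positivity) (ne_of_gt hD), Real.log_mul (ne_of_gt ht0) (ne_of_gt hy1')]
  have l3 : Real.log ((1-t)/(1-t*y)) = Real.log (1-t) - Real.log (1-t*y) :=
    Real.log_div (ne_of_gt ht1') (ne_of_gt hD)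
  have l4 : Real.log (y*(1-t)/(1-t*y)) = Real.log y + Real.log (1-t) - Real.log (1-t*y) := by
    rw [Real.log_div (by positivity) (ne_of_gt hD), Real.log_mul (ne_of_gt hy0) (ne_of_gt ht1')]
  have l5 : Real.log ((1-y)/(1-t*y)) = Real.log (1-y) - Real.log (1-t*y) :=
    Real.log_div (ne_of_gt hy1') (ne_of_gt hD)
  simp only [rIntegrand, e2, e3, l1, l2, l3, l4, l5]
  field_simp
  ring

lemma rogersL_abel {x y : ℝ} (hx0 : 0 < x) (hx1 : x < 1) (hy0 : 0 < y) (hy1 : y < 1) :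
    rogersL x + rogersL y =
      rogersL (x*y) + rogersL (x*(1-y)/(1-x*y)) + rogersL (y*(1-x)/(1-x*y)) := by
  have hDpos : ∀ u : ℝ, 0 ≤ u → u ≤ x → 0 < 1 - u*y := by
    intro u hu0 hux; nlinarith
  set Φ : ℝ → ℝ := fun u => rogersL (u*y) + rogersL (u*(1-y)/(1-u*y))
      + rogersL (y*(1-u)/(1-u*y)) - rogersL u with hΦ
  have hcont : ContinuousOn Φ (Icc 0 x) := by
    have c1 : ContinuousOn (fun u : ℝ => rogersL (u*y)) (Icc 0 x) := by
      have hg : ContinuousOn (fun u : ℝ => u*y) (Icc 0 x) := by fun_prop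
      apply rogersL_continuousOn.comp hg
      intro u hu
      beta_reduce
      rw [mem_Icc]
      constructor
      · have := hu.1; positivity
      · nlinarith [hu.1, hu.2]
    have c2 : ContinuousOn (fun u : ℝ => rogersL (u*(1-y)/(1-u*y))) (Icc 0 x) := by
      have hg : ContinuousOn (fun u : ℝ => u*(1-y)/(1-u*y)) (Icc 0 x) :=
        ContinuousOn.div (by fun_prop) (by fun_prop)
          (fun u hu => ne_of_gt (hDpos u hu.1 hu.2))
      apply rogersL_continuousOn.comp hg
      intro u hu
      beta_reduce
      have hD := hDpos u hu.1 hu.2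
      rw [mem_Icc]
      constructor
      · have h1 : 0 ≤ u*(1-y) := by nlinarith [hu.1]
        positivity
      · rw [div_le_one hD]; nlinarith [hu.1, hu.2]
    have c3 : ContinuousOn (fun u : ℝ => rogersL (y*(1-u)/(1-u*y))) (Icc 0 x) := by
      have hg : ContinuousOn (fun u : ℝ => y*(1-u)/(1-u*y)) (Icc 0 x) :=
        ContinuousOn.div (by fun_prop) (by fun_prop)
          (fun u hu => ne_of_gt (hDpos u hu.1 hu.2))
      apply rogersL_continuousOn.comp hg
      intro u hu
      beta_reduce
      have hD := hDpos u hu.1 hu.2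
      rw [mem_Icc]
      constructor
      · have h1 : 0 ≤ y*(1-u) := by nlinarith [hu.1, hu.2]
        positivity
      · rw [div_le_one hD]; nlinarith [hu.1, hu.2]
    have c4 : ContinuousOn rogersL (Icc 0 x) :=
      rogersL_continuousOn.mono (Icc_subset_Icc le_rfl hx1.le)
    exact ((c1.add c2).add c3).sub c4
  have hderiv : ∀ t ∈ Ioo (0:ℝ) x, HasDerivAt Φ 0 t := by
    intro t ht
    have ht0 : 0 < t := ht.1
    have ht1 : t < 1 := lt_trans ht.2 hx1
    have hD : 0 < 1 - t*y := hDpos t ht0.le ht.2.le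
    have hDne : (1 - t*y) ≠ 0 := ne_of_gt hD
    -- memberships
    have hm1 : t*y ∈ Ioo (0:ℝ) 1 := ⟨by positivity, by nlinarith⟩
    have hm2 : t*(1-y)/(1-t*y) ∈ Ioo (0:ℝ) 1 := by
      constructor
      · have : 0 < t*(1-y) := by nlinarith
        positivity
      · rw [div_lt_one hD]; nlinarith
    have hm3 : y*(1-t)/(1-t*y) ∈ Ioo (0:ℝ) 1 := by
      constructor
      · have : 0 < y*(1-t) := by nlinarith
        positivity
      · rw [div_lt_one hD]; nlinarith
    -- derivatives of inner functions
    have d1 : HasDerivAt (fun u : ℝ => u*y) y t := by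
      simpa using (hasDerivAt_id t).mul_const y
    have dDen : HasDerivAt (fun u : ℝ => 1 - u*y) (-y) t := by
      simpa using ((hasDerivAt_id t).mul_const y).const_sub 1
    have d2 : HasDerivAt (fun u : ℝ => u*(1-y)/(1-u*y)) ((1-y)/(1-t*y)^2) t := by
      have hnum : HasDerivAt (fun u : ℝ => u*(1-y)) (1-y) t := by
        simpa using (hasDerivAt_id t).mul_const (1-y)
      have := hnum.div dDen hDne
      refine this.congr_deriv (Eq.symm ?_)
      field_simp
      ring
    have d3 : HasDerivAt (fun u : ℝ => y*(1-u)/(1-u*y)) (-(y*(1-y))/(1-t*y)^2) t := by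
      have hnum : HasDerivAt (fun u : ℝ => y*(1-u)) (-y) t := by
        simpa using ((hasDerivAt_id t).const_sub 1).const_mul y
      have := hnum.div dDen hDne
      refine this.congr_deriv (Eq.symm ?_)
      field_simp
      ring
    -- compositions
    have D1 : HasDerivAt (fun u : ℝ => rogersL (u*y)) (-(1/2)*rIntegrand (t*y) * y) t :=
      by have := (hasDerivAt_rogersL_s12 hm1).comp t d1; exact this
    have D2 : HasDerivAt (fun u : ℝ => rogersL (u*(1-y)/(1-u*y)))
        (-(1/2)*rIntegrand (t*(1-y)/(1-t*y)) * ((1-y)/(1-t*y)^2)) t :=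
      by have := (hasDerivAt_rogersL_s12 hm2).comp t d2; exact this
    have D3 : HasDerivAt (fun u : ℝ => rogersL (y*(1-u)/(1-u*y)))
        (-(1/2)*rIntegrand (y*(1-t)/(1-t*y)) * (-(y*(1-y))/(1-t*y)^2)) t :=
      by have := (hasDerivAt_rogersL_s12 hm3).comp t d3; exact this
    have D4 : HasDerivAt rogersL (-(1/2)*rIntegrand t) t :=
      hasDerivAt_rogersL_s12 ⟨ht0, ht1⟩
    have Dall := ((D1.add D2).add D3).sub D4
    refine Dall.congr_deriv (Eq.symm ?_)
    exact (abel_log_identity ht0 ht1 hy0 hy1).symm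
  have key : Φ x = Φ 0 := const_of_deriv_zero hx0 hcont hderiv
  have hΦ0 : Φ 0 = rogersL y := by
    simp only [hΦ]
    norm_num [rogersL_zero]
  rw [hΦ0] at key
  simp only [hΦ] at key
  linarith [key]

open scoped Real
open Finset

lemma sin_triple (W U V : ℝ) :
    Real.sin (W+U) * Real.sin (W+V)
      = Real.sin W * Real.sin (W+U+V) + Real.sin U * Real.sin V := by
  simp only [Real.sin_add, Real.cos_add]
  linear_combination (Real.sin U * Real.sin V) * (Real.sin_sq_add_cos_sq W)

namespace RogersAux

noncomputable def ss (n k : ℕ) : ℝ := Real.sin (k * (π / (n+3)))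

lemma ss_zero (n : ℕ) : ss n 0 = 0 := by simp [ss]

lemma ss_top (n : ℕ) : ss n (n+3) = 0 := by
  have h3 : ((n:ℝ)+3) ≠ 0 := by positivity
  have : ((n+3 : ℕ) : ℝ) * (π / (n+3)) = π := by push_cast; field_simp
  rw [ss, this, Real.sin_pi]

lemma ss_pos (n : ℕ) {k : ℕ} (h1 : 1 ≤ k) (h2 : k ≤ n+2) : 0 < ss n k := by
  have hk : (0:ℝ) < k := by exact_mod_cast h1
  have hk2 : (k:ℝ) ≤ (n:ℝ)+2 := by exact_mod_cast h2
  apply Real.sin_pos_of_pos_of_lt_pi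
  · positivity
  · have h3 : (0:ℝ) < π / (n+3) := by positivity
    have : (k:ℝ) * (π/(n+3)) < ((n:ℝ)+3) * (π/(n+3)) := by
      apply mul_lt_mul_of_pos_right _ h3
      linarith
    calc (k:ℝ) * (π/(n+3)) < ((n:ℝ)+3) * (π/(n+3)) := this
      _ = π := by field_simp

lemma ss_nonneg (n : ℕ) {k : ℕ} (h2 : k ≤ n+3) : 0 ≤ ss n k := by
  have hk2 : (k:ℝ) ≤ (n:ℝ)+3 := by exact_mod_cast h2
  apply Real.sin_nonneg_of_nonneg_of_le_pi
  · positivity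
  · have h3 : (0:ℝ) < π / (n+3) := by positivity
    calc (k:ℝ) * (π/(n+3)) ≤ ((n:ℝ)+3) * (π/(n+3)) := by
          apply mul_le_mul_of_nonneg_right _ h3.le
          linarith
      _ = π := by field_simp

lemma ss_reflect (n : ℕ) {k : ℕ} (h : k ≤ n+3) : ss n (n+3-k) = ss n k := by
  have hcast : ((n+3-k : ℕ) : ℝ) = ((n:ℝ)+3) - k := by
    push_cast [Nat.cast_sub h]
    ring
  have h3 : ((n:ℝ)+3) ≠ 0 := by positivity
  rw [ss, hcast, show (((n:ℝ)+3) - k) * (π/(n+3)) = π - k * (π/(n+3)) by field_simp,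
    Real.sin_pi_sub]
  rfl

lemma ss_key (n w u v : ℕ) :
    ss n (w+u) * ss n (w+v) = ss n w * ss n (w+u+v) + ss n u * ss n v := by
  simp only [ss]
  push_cast
  have h := sin_triple ((w:ℝ)*(π/(n+3))) ((u:ℝ)*(π/(n+3))) ((v:ℝ)*(π/(n+3)))
  ring_nf at h ⊢
  exact h

end RogersAux

namespace RogersAux
open scoped Real

noncomputable def pp (n a m : ℕ) : ℝ := ss n 1 * ss n a / (ss n m * ss n (a+m-1))

lemma pp_zero (n m : ℕ) : pp n 0 m = 0 := by simp [pp, ss_zero]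

lemma pp_succ (n a m : ℕ) : pp n a (m+1) = ss n 1 * ss n a / (ss n (m+1) * ss n (a+m)) := by
  have h : a + (m+1) - 1 = a + m := by omega
  rw [pp, h]

lemma pp_one_right (n : ℕ) {m : ℕ} (h1 : 1 ≤ m) (h2 : m ≤ n+2) : pp n m 1 = 1 := by
  have h : m + 1 - 1 = m := by omega
  rw [pp, h]
  have p1 := ss_pos n le_rfl (by omega)
  have pm := ss_pos n h1 h2
  field_simp

lemma star_main (n a b : ℕ) (ha : 1 ≤ a) (hb : 1 ≤ b) (hab : a+b+2 ≤ n+2) :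
    rogersL (pp n (a+1) (b+1)) + rogersL (pp n (b+1) (a+1))
      = rogersL (pp n 1 (a+b+1)) + rogersL (pp n a (b+1)) + rogersL (pp n b (a+1)) := by
  have p1 : 0 < ss n 1 := ss_pos n le_rfl (by omega)
  have pa : 0 < ss n a := ss_pos n ha (by omega)
  have pb : 0 < ss n b := ss_pos n hb (by omega)
  have pa1 : 0 < ss n (a+1) := ss_pos n (by omega) (by omega)
  have pb1 : 0 < ss n (b+1) := ss_pos n (by omega) (by omega)
  have pab : 0 < ss n (a+b) := ss_pos n (by omega) (by omega)
  have pab1 : 0 < ss n (a+b+1) := ss_pos n (by omega) (by omega)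
  have pab2 : 0 < ss n (a+b+2) := ss_pos n (by omega) (by omega)
  have k1 : ss n (b+1) * ss n (a+b+1) = ss n b * ss n (a+b+2) + ss n 1 * ss n (a+1) := by
    have h := ss_key n b 1 (a+1)
    rw [show b+(a+1) = a+b+1 by omega, show b+1+(a+1) = a+b+2 by omega] at h
    exact h
  have k2 : ss n (a+1) * ss n (a+b+1) = ss n a * ss n (a+b+2) + ss n 1 * ss n (b+1) := by
    have h := ss_key n a 1 (b+1)
    rw [show a+(b+1) = a+b+1 by omega, show a+1+(b+1) = a+b+2 by omega] at h
    exact h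
  have k3 : ss n (a+b+1) * ss n (a+b+1) = ss n (a+b) * ss n (a+b+2) + ss n 1 * ss n 1 := by
    have h := ss_key n (a+b) 1 1
    rw [show a+b+1+1 = a+b+2 by omega] at h
    exact h
  have nz : ss n 1 ≠ 0 ∧ ss n a ≠ 0 ∧ ss n b ≠ 0 ∧ ss n (a+1) ≠ 0 ∧ ss n (b+1) ≠ 0 ∧
      ss n (a+b) ≠ 0 ∧ ss n (a+b+1) ≠ 0 ∧ ss n (a+b+2) ≠ 0 :=
    ⟨ne_of_gt p1, ne_of_gt pa, ne_of_gt pb, ne_of_gt pa1, ne_of_gt pb1,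
      ne_of_gt pab, ne_of_gt pab1, ne_of_gt pab2⟩
  obtain ⟨n1, na, nb, na1, nb1, nab, nab1, nab2⟩ := nz
  set X := pp n (a+1) (b+1) with hXdef
  set Y := pp n (b+1) (a+1) with hYdef
  have hX : X = ss n 1 * ss n (a+1) / (ss n (b+1) * ss n (a+b+1)) := by
    rw [hXdef, pp_succ, show a+1+b = a+b+1 by omega]
  have hY : Y = ss n 1 * ss n (b+1) / (ss n (a+1) * ss n (a+b+1)) := by
    rw [hYdef, pp_succ, show b+1+a = a+b+1 by omega]
  have hX0 : 0 < X := by rw [hX]; exact div_pos (mul_pos p1 pa1) (mul_pos pb1 pab1)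
  have hY0 : 0 < Y := by rw [hY]; exact div_pos (mul_pos p1 pb1) (mul_pos pa1 pab1)
  have hX1 : X < 1 := by
    rw [hX, div_lt_one (mul_pos pb1 pab1)]
    nlinarith [mul_pos pb pab2]
  have hY1 : Y < 1 := by
    rw [hY, div_lt_one (mul_pos pa1 pab1)]
    nlinarith [mul_pos pa pab2]
  have habel := rogersL_abel hX0 hX1 hY0 hY1
  have eXY : X * Y = pp n 1 (a+b+1) := by
    rw [hX, hY, pp, show 1+(a+b+1)-1 = a+b+1 by omega]
    field_simp
  have e1Y : 1 - Y = ss n a * ss n (a+b+2) / (ss n (a+1) * ss n (a+b+1)) := by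
    rw [hY]
    rw [eq_div_iff (ne_of_gt (mul_pos pa1 pab1))]
    field_simp
    linear_combination k2
  have e1X : 1 - X = ss n b * ss n (a+b+2) / (ss n (b+1) * ss n (a+b+1)) := by
    rw [hX]
    rw [eq_div_iff (ne_of_gt (mul_pos pb1 pab1))]
    field_simp
    linear_combination k1
  have eXY' : X * Y = ss n 1 * ss n 1 / (ss n (a+b+1) * ss n (a+b+1)) := by
    rw [hX, hY]
    field_simp
  have e1XY : 1 - X * Y = ss n (a+b) * ss n (a+b+2) / (ss n (a+b+1) * ss n (a+b+1)) := by
    rw [eXY', eq_div_iff (ne_of_gt (mul_pos pab1 pab1)), sub_mul,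
      div_mul_cancel₀ _ (ne_of_gt (mul_pos pab1 pab1)), one_mul]
    linear_combination k3
  have eA : X * (1 - Y) / (1 - X * Y) = pp n a (b+1) := by
    rw [e1Y, e1XY, hX, pp_succ]
    field_simp
  have eB : Y * (1 - X) / (1 - X * Y) = pp n b (a+1) := by
    rw [e1X, e1XY, hY, pp_succ, show b+a = a+b by omega]
    field_simp
  rw [eA, eB, eXY] at habel
  exact habel

end RogersAux

namespace RogersAux
open scoped Real
open Finset

lemma star_all (n : ℕ) {k m : ℕ} (hk : 1 ≤ k) (hm : 1 ≤ m) (h3 : 3 ≤ k+m) (h2 : k+m ≤ n+2) :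
    rogersL (pp n k m) + rogersL (pp n m k)
      = rogersL (pp n 1 (k+m-1)) + rogersL (pp n (k-1) m) + rogersL (pp n (m-1) k) := by
  rcases Nat.lt_or_ge k 2 with hk2|hk2
  · have hk1 : k = 1 := by omega
    subst hk1
    have hm2 : 2 ≤ m := by omega
    rw [show 1+m-1 = m by omega, show (1:ℕ)-1 = 0 by omega, pp_zero, rogersL_zero,
      pp_one_right n hm (by omega), pp_one_right n (show 1 ≤ m-1 by omega) (by omega)]
    ring
  · rcases Nat.lt_or_ge m 2 with hm2|hm2
    · have hm1 : m = 1 := by omega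
      subst hm1
      rw [show k+1-1 = k by omega, show (1:ℕ)-1 = 0 by omega, pp_zero, rogersL_zero,
        pp_one_right n hk (by omega), pp_one_right n (show 1 ≤ k-1 by omega) (by omega)]
      ring
    · obtain ⟨a, rfl⟩ : ∃ a, k = a+1 := ⟨k-1, by omega⟩
      obtain ⟨b, rfl⟩ : ∃ b, m = b+1 := ⟨m-1, by omega⟩
      have h := star_main n a b (by omega) (by omega) (by omega)
      rw [show a+1+(b+1)-1 = a+b+1 by omega, show a+1-1 = a by omega,
        show b+1-1 = b by omega]
      exact h

noncomputable def DD (n N : ℕ) : ℝ :=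
  ∑ k ∈ Finset.range (N+1), rogersL (pp n (k+1) (N+1-k))

lemma DD_reflect (n N : ℕ) :
    ∑ j ∈ Finset.range (N+1), rogersL (pp n (N+1-j) (j+1)) = DD n N := by
  have h := Finset.sum_range_reflect (fun k => rogersL (pp n (k+1) (N+1-k))) (N+1)
  rw [DD, ← h]
  apply Finset.sum_congr rfl
  intro j hj
  have hj' : j ≤ N := by simpa [Nat.lt_succ_iff] using hj
  congr 2 <;> omega

lemma DD_zero (n : ℕ) : DD n 0 = π^2/6 := by
  have h : DD n 0 = rogersL (pp n 1 1) := by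
    rw [DD, Finset.sum_range_one]
  rw [h, pp_one_right n le_rfl (by omega), rogersL_one]

lemma dlem (n M : ℕ) (hM : M+1 ≤ n) :
    2 * DD n (M+1) = ((M:ℝ)+2) * rogersL (pp n 1 (M+2)) + 2 * DD n M := by
  have hpair : 2 * DD n (M+1)
      = ∑ j ∈ Finset.range (M+2), (rogersL (pp n (j+1) (M+2-j)) + rogersL (pp n (M+2-j) (j+1))) := by
    rw [Finset.sum_add_distrib, two_mul]
    congr 1
    exact (DD_reflect n (M+1)).symm
  have hstar : ∀ j ∈ Finset.range (M+2),
      rogersL (pp n (j+1) (M+2-j)) + rogersL (pp n (M+2-j) (j+1))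
        = rogersL (pp n 1 (M+2)) + (rogersL (pp n j (M+2-j)) + rogersL (pp n (M+1-j) (j+1))) := by
    intro j hj
    have hj' : j ≤ M+1 := by simpa [Nat.lt_succ_iff] using hj
    have h := star_all n (k := j+1) (m := M+2-j) (by omega) (by omega) (by omega) (by omega)
    rw [show j+1+(M+2-j)-1 = M+2 by omega, show j+1-1 = j by omega,
      show M+2-j-1 = M+1-j by omega] at h
    rw [h]
    ring
  rw [hpair, Finset.sum_congr rfl hstar, Finset.sum_add_distrib, Finset.sum_add_distrib,
    Finset.sum_const, Finset.card_range]
  have hS1 : ∑ j ∈ Finset.range (M+2), rogersL (pp n j (M+2-j)) = DD n M := by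
    rw [Finset.sum_range_succ' (fun j => rogersL (pp n j (M+2-j))) (M+1)]
    rw [pp_zero, rogersL_zero, add_zero, DD]
    apply Finset.sum_congr rfl
    intro i hi
    congr 2
    omega
  have hS2 : ∑ j ∈ Finset.range (M+2), rogersL (pp n (M+1-j) (j+1)) = DD n M := by
    rw [Finset.sum_range_succ (fun j => rogersL (pp n (M+1-j) (j+1))) (M+1)]
    rw [show M+1-(M+1) = 0 by omega, pp_zero, rogersL_zero, add_zero]
    exact DD_reflect n M
  rw [hS1, hS2, nsmul_eq_mul]
  push_cast
  ring

end RogersAux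

namespace RogersAux
open scoped Real
open Finset

noncomputable def yy (n j : ℕ) : ℝ := ss n 1 * ss n j / (ss n 2 * ss n (j+1))

lemma pp_one_left (n m : ℕ) : pp n 1 m = ss n 1 * ss n 1 / (ss n m * ss n m) := by
  rw [pp, show 1+m-1 = m by omega]

lemma pp_top (n k : ℕ) (hk : k ≤ n) : pp n (k+1) (n+1-k) = yy n (k+1) := by
  rw [pp, yy, show k+1+(n+1-k)-1 = n+1 by omega,
    show n+1-k = n+3-(k+2) by omega, ss_reflect n (by omega),
    show n+1 = n+3-2 by omega, ss_reflect n (by omega),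
    show k+1+1 = k+2 by omega]
  ring

lemma one_sub_yy (n k : ℕ) (hk : k ≤ n) :
    1 - yy n (k+1) = ss n 1 * ss n (k+3) / (ss n 2 * ss n (k+2)) := by
  have p2 : 0 < ss n 2 := ss_pos n (by omega) (by omega)
  have pk2 : 0 < ss n (k+2) := ss_pos n (by omega) (by omega)
  have key : ss n (k+2) * ss n 2 = ss n 1 * ss n (k+3) + ss n (k+1) * ss n 1 := by
    have h := ss_key n 1 (k+1) 1
    rw [show 1+(k+1) = k+2 by omega, show 1+1 = 2 by omega,
      show k+2+1 = k+3 by omega] at h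
    exact h
  rw [yy, eq_div_iff (ne_of_gt (mul_pos p2 pk2)), sub_mul,
    div_mul_cancel₀ _ (ne_of_gt (mul_pos p2 pk2)), one_mul]
  rw [show k+1+1 = k+2 by omega]
  linear_combination key

lemma yy_refl_pair (n k : ℕ) (hk : k < n) :
    rogersL (yy n (k+1)) + rogersL (yy n (n-k)) = π^2/6 := by
  have p1 : 0 < ss n 1 := ss_pos n le_rfl (by omega)
  have p2 : 0 < ss n 2 := ss_pos n (by omega) (by omega)
  have pk1 : 0 < ss n (k+1) := ss_pos n (by omega) (by omega)
  have pk2 : 0 < ss n (k+2) := ss_pos n (by omega) (by omega)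
  have pk3 : 0 ≤ ss n (k+3) := ss_nonneg n (by omega)
  have hy0 : 0 < yy n (k+1) := by
    rw [yy, show k+1+1 = k+2 by omega]
    exact div_pos (mul_pos p1 pk1) (mul_pos p2 pk2)
  have hcompl : yy n (n-k) = 1 - yy n (k+1) := by
    rw [one_sub_yy n k hk.le, yy,
      show n-k = n+3-(k+3) by omega, ss_reflect n (by omega),
      show n+3-(k+3)+1 = n+3-(k+2) by omega, ss_reflect n (by omega)]
  have hy1 : yy n (k+1) ≤ 1 := by
    have h := one_sub_yy n k hk.le
    nlinarith [div_nonneg (mul_nonneg p1.le pk3) (mul_pos p2 pk2).le, h]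
  rw [hcompl]
  exact rogersL_reflect hy0.le hy1

lemma DD_top (n : ℕ) (hn : 1 ≤ n) : 2 * DD n n = n*(π^2/6) + 2*(π^2/6) := by
  have hW : ∑ k ∈ Finset.range (n+1), rogersL (pp n (k+1) (n+1-k))
      = (∑ k ∈ Finset.range n, rogersL (yy n (k+1))) + π^2/6 := by
    rw [Finset.sum_range_succ, show n+1-n = 1 by omega,
      pp_one_right n (by omega) (by omega), rogersL_one]
    congr 1
    apply Finset.sum_congr rfl
    intro k hk
    rw [pp_top n k (by simpa [Nat.lt_succ_iff] using Nat.le_of_lt_succ (by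
      exact Nat.lt_succ_of_lt (Finset.mem_range.mp hk)))]
  have hrev : ∑ k ∈ Finset.range n, rogersL (yy n (n-k))
      = ∑ k ∈ Finset.range n, rogersL (yy n (k+1)) := by
    have h := Finset.sum_range_reflect (fun k => rogersL (yy n (k+1))) n
    rw [← h]
    apply Finset.sum_congr rfl
    intro j hj
    have hj' : j < n := Finset.mem_range.mp hj
    congr 2
    omega
  have hpairsum : (∑ k ∈ Finset.range n, rogersL (yy n (k+1)))
      + ∑ k ∈ Finset.range n, rogersL (yy n (n-k)) = n * (π^2/6) := by
    rw [← Finset.sum_add_distrib]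
    rw [Finset.sum_congr rfl (fun k hk => yy_refl_pair n k (Finset.mem_range.mp hk))]
    rw [Finset.sum_const, Finset.card_range, nsmul_eq_mul]
  rw [DD, hW]
  rw [hrev] at hpairsum
  linarith [hpairsum]

end RogersAux

open Finset RogersAux in
/-- `∑_{j=1}^n L(sin²(π/(n+3))/sin²(π(j+1)/(n+3))) = (π²/6)·(2n/(n+3))`. -/
theorem rogers_sum_identity (n : ℕ) (hn : 1 ≤ n) :
    ∑ j ∈ Finset.Icc 1 n,
        rogersL (Real.sin (π / (n + 3)) ^ 2 / Real.sin (π * (j + 1) / (n + 3)) ^ 2)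
      = π ^ 2 / 6 * (2 * n / (n + 3)) := by
  have hA : ∑ i ∈ range n, (((i:ℝ)+2) * rogersL (pp n 1 (i+2))) = n*(π^2/6) := by
    have htel := Finset.sum_range_sub (fun N => 2 * DD n N) n
    have hterm : ∀ i ∈ range n,
        2 * DD n (i+1) - 2 * DD n i = ((i:ℝ)+2) * rogersL (pp n 1 (i+2)) := by
      intro i hi
      have h := dlem n i (by have := Finset.mem_range.mp hi; omega)
      linarith [h]
    rw [Finset.sum_congr rfl hterm] at htel
    rw [htel, DD_zero]
    have htop := DD_top n hn
    linarith [htop]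
  have hsym : ∀ i, i < n → pp n 1 (n+1-i) = pp n 1 (i+2) := by
    intro i hi
    rw [pp_one_left, pp_one_left, show n+1-i = n+3-(i+2) by omega, ss_reflect n (by omega)]
  have hB : ∑ i ∈ range n, (((n:ℝ)+1-i) * rogersL (pp n 1 (i+2))) = n*(π^2/6) := by
    have h := Finset.sum_range_reflect (fun i => ((i:ℝ)+2) * rogersL (pp n 1 (i+2))) n
    rw [hA] at h
    rw [← h]
    apply Finset.sum_congr rfl
    intro j hj
    have hj' : j < n := Finset.mem_range.mp hj
    have e2 : pp n 1 (n-1-j+2) = pp n 1 (j+2) := by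
      rw [show n-1-j+2 = n+1-j by omega]
      exact hsym j hj'
    have e1 : ((n-1-j : ℕ):ℝ) = (n:ℝ)-1-j := by
      have : j + 1 ≤ n := hj'
      have e : n - 1 - j = n - (1+j) := by omega
      rw [e, Nat.cast_sub (by omega : 1 + j ≤ n)]
      push_cast
      ring
    rw [e2, e1]
    ring
  have hS : ((n:ℝ)+3) * (∑ i ∈ range n, rogersL (pp n 1 (i+2))) = 2*n*(π^2/6) := by
    rw [Finset.mul_sum]
    have hterm : ∀ i ∈ range n, ((n:ℝ)+3) * rogersL (pp n 1 (i+2))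
        = ((i:ℝ)+2)*rogersL (pp n 1 (i+2)) + ((n:ℝ)+1-i)*rogersL (pp n 1 (i+2)) := by
      intro i _
      ring
    rw [Finset.sum_congr rfl hterm, Finset.sum_add_distrib, hA, hB]
    ring
  have hIcc : ∑ j ∈ Finset.Icc 1 n,
      rogersL (Real.sin (π / (n + 3)) ^ 2 / Real.sin (π * (j + 1) / (n + 3)) ^ 2)
      = ∑ i ∈ range n, rogersL (pp n 1 (i+2)) := by
    rw [← Finset.Ico_add_one_right_eq_Icc, Finset.sum_Ico_eq_sum_range, show n+1-1 = n by omega]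
    apply Finset.sum_congr rfl
    intro i hi
    congr 1
    rw [pp_one_left]
    simp only [ss]
    push_cast
    rw [one_mul]
    rw [show ((i:ℝ)+2)*(π/((n:ℝ)+3)) = π*((1+(i:ℝ))+1)/((n:ℝ)+3) by ring]
    rw [pow_two, pow_two]
  rw [hIcc]
  have hne : ((n:ℝ)+3) ≠ 0 := by positivity
  rw [show π^2/6*(2*(n:ℝ)/((n:ℝ)+3)) = (2*(n:ℝ)*(π^2/6))/((n:ℝ)+3) by ring,
    eq_div_iff hne]
  linear_combination hS
end

section
/- Let X(i,j)(z) for i ∈ ℤ, 1 ≤ j ≤ n be functions [0,1] → ℝ satisfying the X-system for every z ∈ [0,1], such that: (1) 0 < X(i,j)(0) < 1 for all i,j; (2) X(0,j) and X(1,j) are continuously differentiable; (3) 0 < X(i,j)(z) < 1 for i = 0,1 and all z. Then for all i,j, X(i,j) is continuously differentiable and 0 < X(i,j)(z) < 1 for all z ∈ [0,1]. -/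
private lemma x_aux_bounds {x b a : ℝ} (hx : x ≠ 0) (hb : b < 0) (ha : 0 < a)
    (heq : b * (1 - 1/x) = a) : 0 < x ∧ x < 1 ∧ x = b / (b - a) := by
  have h1 : x * (b - a) = b := by
    field_simp at heq
    nlinarith [heq]
  have hba : b - a < 0 := by linarith
  have hba' : b - a ≠ 0 := ne_of_lt hba
  have hx3 : x = b / (b - a) := by
    field_simp
    linarith [h1]
  refine ⟨?_, ?_, hx3⟩
  · rw [hx3]; exact div_pos_of_neg_of_neg hb hba
  · nlinarith [h1]

private lemma x_step (n : ℤ) (hn : 1 ≤ n) (X : ℤ → ℤ → ℝ → ℝ) (a b c : ℤ)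
    (hb : ∀ i z, X i 0 z = 0 ∧ X i (n + 1) z = 0)
    (hnzc : ∀ j, 1 ≤ j → j ≤ n → ∀ z ∈ Set.Icc (0:ℝ) 1, X c j z ≠ 0)
    (heq : ∀ j, 1 ≤ j → j ≤ n → ∀ z ∈ Set.Icc (0:ℝ) 1,
      (1 - 1 / X b j z) * (1 - 1 / X c j z)
        = (1 - X a (j - 1) z) * (1 - X a (j + 1) z))
    (hQa : ∀ j, 1 ≤ j → j ≤ n → ContDiffOn ℝ 1 (X a j) (Set.Icc 0 1) ∧
      ∀ z ∈ Set.Icc (0:ℝ) 1, 0 < X a j z ∧ X a j z < 1)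
    (hQb : ∀ j, 1 ≤ j → j ≤ n → ContDiffOn ℝ 1 (X b j) (Set.Icc 0 1) ∧
      ∀ z ∈ Set.Icc (0:ℝ) 1, 0 < X b j z ∧ X b j z < 1) :
    ∀ j, 1 ≤ j → j ≤ n → ContDiffOn ℝ 1 (X c j) (Set.Icc 0 1) ∧
      ∀ z ∈ Set.Icc (0:ℝ) 1, 0 < X c j z ∧ X c j z < 1 := by
  intro j hj1 hjn
  -- facts about row `a` at indices possibly on the boundary
  have fact : ∀ k : ℤ, 0 ≤ k → k ≤ n + 1 →
      ContDiffOn ℝ 1 (X a k) (Set.Icc 0 1) ∧ ∀ z ∈ Set.Icc (0:ℝ) 1, X a k z < 1 := by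
    intro k hk0 hk1
    rcases eq_or_lt_of_le hk0 with h | h
    · have hz : X a k = fun _ => (0:ℝ) := funext fun z => by rw [← h]; exact (hb a z).1
      rw [hz]
      exact ⟨contDiffOn_const, fun z _ => one_pos⟩
    rcases eq_or_lt_of_le hk1 with h' | h'
    · have hz : X a k = fun _ => (0:ℝ) := funext fun z => by rw [h']; exact (hb a z).2
      rw [hz]
      exact ⟨contDiffOn_const, fun z _ => one_pos⟩
    · exact ⟨(hQa k (by omega) (by omega)).1,
        fun z hz => ((hQa k (by omega) (by omega)).2 z hz).2⟩
  obtain ⟨hCl, hl1⟩ := fact (j - 1) (by omega) (by omega)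
  obtain ⟨hCr, hr1⟩ := fact (j + 1) (by omega) (by omega)
  obtain ⟨hCb, hBb⟩ := hQb j hj1 hjn
  -- pointwise analysis
  have key : ∀ z ∈ Set.Icc (0:ℝ) 1, 0 < X c j z ∧ X c j z < 1 ∧
      X c j z = (1 - 1 / X b j z) /
        ((1 - 1 / X b j z) - (1 - X a (j - 1) z) * (1 - X a (j + 1) z)) := by
    intro z hz
    have hA : 0 < (1 - X a (j - 1) z) * (1 - X a (j + 1) z) :=
      mul_pos (by linarith [hl1 z hz]) (by linarith [hr1 z hz])
    have hBpos := (hBb z hz).1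
    have hBlt := (hBb z hz).2
    have hinv : 1 < 1 / X b j z := by
      rw [lt_div_iff₀ hBpos]; linarith
    have hB : (1 - 1 / X b j z) < 0 := by linarith
    have heqz := heq j hj1 hjn z hz
    exact x_aux_bounds (hnzc j hj1 hjn z hz) hB hA heqz
  refine ⟨?_, fun z hz => ⟨(key z hz).1, (key z hz).2.1⟩⟩
  -- smoothness via the explicit formula
  have hBne : ∀ z ∈ Set.Icc (0:ℝ) 1, X b j z ≠ 0 := fun z hz => ne_of_gt (hBb z hz).1
  have hCB : ContDiffOn ℝ 1 (fun z => 1 - 1 / X b j z) (Set.Icc 0 1) :=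
    contDiffOn_const.sub (contDiffOn_const.div hCb hBne)
  have hCA : ContDiffOn ℝ 1
      (fun z => (1 - X a (j - 1) z) * (1 - X a (j + 1) z)) (Set.Icc 0 1) :=
    (contDiffOn_const.sub hCl).mul (contDiffOn_const.sub hCr)
  have hCden : ContDiffOn ℝ 1
      (fun z => (1 - 1 / X b j z) - (1 - X a (j - 1) z) * (1 - X a (j + 1) z))
      (Set.Icc 0 1) := hCB.sub hCA
  have hdenne : ∀ z ∈ Set.Icc (0:ℝ) 1,
      (1 - 1 / X b j z) - (1 - X a (j - 1) z) * (1 - X a (j + 1) z) ≠ 0 := by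
    intro z hz
    have hA : 0 < (1 - X a (j - 1) z) * (1 - X a (j + 1) z) :=
      mul_pos (by linarith [hl1 z hz]) (by linarith [hr1 z hz])
    have hBpos := (hBb z hz).1
    have hBlt := (hBb z hz).2
    have hinv : 1 < 1 / X b j z := by
      rw [lt_div_iff₀ hBpos]; linarith
    intro habs
    nlinarith
  exact (hCB.div hCden hdenne).congr fun z hz => (key z hz).2.2

/-- If functions `X(i,j) : [0,1] → ℝ` satisfy the (A_n, A_1) X-system for every `z ∈ [0,1]`,
with `0 < X(i,j)(0) < 1` for all `i,j`, and `X(0,j), X(1,j)` continuously differentiable with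
values in `(0,1)` on `[0,1]`, then every `X(i,j)` is continuously differentiable with values
in `(0,1)` on `[0,1]`. -/
theorem x_system_interpolation (n : ℤ) (hn : 1 ≤ n) (X : ℤ → ℤ → ℝ → ℝ)
    (hb : ∀ i z, X i 0 z = 0 ∧ X i (n + 1) z = 0)
    (hnz : ∀ i j, 1 ≤ j → j ≤ n → ∀ z ∈ Set.Icc (0:ℝ) 1, X i j z ≠ 0)
    (hsys : ∀ i j, 1 ≤ j → j ≤ n → ∀ z ∈ Set.Icc (0:ℝ) 1,
      (1 - 1 / X (i - 1) j z) * (1 - 1 / X (i + 1) j z)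
        = (1 - X i (j - 1) z) * (1 - X i (j + 1) z))
    (hzero : ∀ i j, 1 ≤ j → j ≤ n → 0 < X i j 0 ∧ X i j 0 < 1)
    (hC1 : ∀ i, i = 0 ∨ i = 1 → ∀ j, 1 ≤ j → j ≤ n → ContDiffOn ℝ 1 (X i j) (Set.Icc 0 1))
    (h01 : ∀ i, i = 0 ∨ i = 1 → ∀ j, 1 ≤ j → j ≤ n →
      ∀ z ∈ Set.Icc (0:ℝ) 1, 0 < X i j z ∧ X i j z < 1) :
    ∀ i j, 1 ≤ j → j ≤ n → ContDiffOn ℝ 1 (X i j) (Set.Icc 0 1) ∧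
      ∀ z ∈ Set.Icc (0:ℝ) 1, 0 < X i j z ∧ X i j z < 1 := by
  set Q : ℤ → Prop := fun i => ∀ j, 1 ≤ j → j ≤ n →
      ContDiffOn ℝ 1 (X i j) (Set.Icc 0 1) ∧
      ∀ z ∈ Set.Icc (0:ℝ) 1, 0 < X i j z ∧ X i j z < 1 with hQdef
  have hQ0 : Q 0 := fun j hj1 hjn =>
    ⟨hC1 0 (Or.inl rfl) j hj1 hjn, h01 0 (Or.inl rfl) j hj1 hjn⟩
  have hQ1 : Q 1 := fun j hj1 hjn =>
    ⟨hC1 1 (Or.inr rfl) j hj1 hjn, h01 1 (Or.inr rfl) j hj1 hjn⟩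
  have hstepF : ∀ i : ℤ, Q i → Q (i + 1) → Q (i + 2) := by
    intro i hi hi1
    apply x_step n hn X (i + 1) i (i + 2) hb (fun j => hnz (i + 2) j) ?_ hi1 hi
    intro j hj1 hjn z hz
    have h := hsys (i + 1) j hj1 hjn z hz
    have e1 : i + 1 - 1 = i := by ring
    have e2 : i + 1 + 1 = i + 2 := by ring
    rw [e1, e2] at h
    exact h
  have hstepB : ∀ i : ℤ, Q i → Q (i + 1) → Q (i - 1) := by
    intro i hi hi1
    apply x_step n hn X i (i + 1) (i - 1) hb (fun j => hnz (i - 1) j) ?_ hi hi1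
    intro j hj1 hjn z hz
    have h := hsys i j hj1 hjn z hz
    linear_combination h
  have main : ∀ i : ℤ, Q i ∧ Q (i + 1) := by
    intro i
    induction i using Int.induction_on with
    | zero => exact ⟨hQ0, hQ1⟩
    | succ k ih =>
        refine ⟨ih.2, ?_⟩
        have := hstepF k ih.1 ih.2
        have e : (k : ℤ) + 1 + 1 = k + 2 := by ring
        rw [e]
        exact this
    | pred k ih =>
        refine ⟨hstepB (-k) ih.1 (by
          have e : (-(k:ℤ)) + 1 = -k + 1 := rfl
          exact ih.2), ?_⟩
        have e : (-(k:ℤ)) - 1 + 1 = -k := by ring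
        rw [e]
        exact ih.1
  exact fun i => (main i).1
end
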